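/- arXiv:0710.3757 — 4 statements merged into one kernel-verified Lean document; each statement's English description precedes it below -/
import Mathlib

section
/- For every k ≥ 0, the time series {X_{λ_k + n}}_{n∈ℤ}, obtained by re-centering the process at the stopping time λ_k, has the same distribution as the original process {X_n}_{n∈ℤ}. -/
open MeasureTheory Filter Topology

noncomputable section

/-- Index of the dyadic cell of level `k` containing `x`:
`x ∈ [i 2^{-k}, (i+1) 2^{-k})` iff `qcell k x = i`. -/
def qcell (k : ℕ) (x : ℝ) : ℤ := ⌊x * 2 ^ k⌋

/-- The dyadic cell of level `k` containing `x`, as a subset of `ℝ`. -/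
def dcell (k : ℕ) (x : ℝ) : Set ℝ :=
  Set.Ico ((qcell k x : ℝ) / 2 ^ k) (((qcell k x : ℝ) + 1) / 2 ^ k)

variable {Ω : Type*}

/-- The stopping times `λ_n`. -/
def lam (X : ℤ → Ω → ℝ) : ℕ → Ω → ℕ
  | 0 => fun _ => 0
  | n + 1 => fun ω =>
      lam X n ω +
        sInf {t : ℕ | 0 < t ∧ ∀ i : ℕ, i ≤ lam X n ω →
          qcell (n + 1) (X ((t : ℤ) + (i : ℤ)) ω) = qcell (n + 1) (X (i : ℤ) ω)}

/-- Almost surely every matching set is nonempty, i.e. all stopping times are finite. -/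
def LamFinite [MeasurableSpace Ω] (μ : Measure Ω) (X : ℤ → Ω → ℝ) : Prop :=
  ∀ᵐ ω ∂μ, ∀ n : ℕ,
    {t : ℕ | 0 < t ∧ ∀ i : ℕ, i ≤ lam X n ω →
      qcell (n + 1) (X ((t : ℤ) + (i : ℤ)) ω) = qcell (n + 1) (X (i : ℤ) ω)}.Nonempty

/-- Stationarity of a two-sided real valued process. -/
def IsStationaryProc [MeasurableSpace Ω] (μ : Measure Ω) (X : ℤ → Ω → ℝ) : Prop :=
  ∀ k : ℤ, μ.map (fun ω => fun i : ℤ => X (i + k) ω) = μ.map (fun ω => fun i : ℤ => X i ω)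

/-- The estimator `m_n`. -/
def mEst (X : ℤ → Ω → ℝ) (f : ℕ → ℤ → ℝ) (n : ℕ) (ω : Ω) : ℝ :=
  (n : ℝ)⁻¹ * ∑ j ∈ Finset.range n, f j (qcell j (X ((lam X j ω : ℤ) + 1) ω))

/-- The value following the stopping time `λ_n`. -/
def Xnext (X : ℤ → Ω → ℝ) (n : ℕ) (ω : Ω) : ℝ := X ((lam X n ω : ℤ) + 1) ω

/-- The σ-algebra generated by the quantized data segment `[X_0^{λ_n}]^n`. -/
def quantField [MeasurableSpace Ω] (X : ℤ → Ω → ℝ) (n : ℕ) : MeasurableSpace Ω :=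
  MeasurableSpace.comap
    (fun ω => ((lam X n ω, fun i : ℕ => qcell n (X ((min i (lam X n ω) : ℕ) : ℤ) ω)) : ℕ × (ℕ → ℤ)))
    inferInstance

/-- The σ-algebra generated by the data segment `X_0^{λ_n}`. -/
def segField [MeasurableSpace Ω] (X : ℤ → Ω → ℝ) (n : ℕ) : MeasurableSpace Ω :=
  MeasurableSpace.comap
    (fun ω => ((lam X n ω, fun i : ℕ => X ((min i (lam X n ω) : ℕ) : ℤ) ω) : ℕ × (ℕ → ℝ)))
    inferInstance

/-- `tildeX X n ω` is `tilde X_{-n}(ω) = lim_j X_{λ_j - n}(ω)`. -/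
def tildeX (X : ℤ → Ω → ℝ) (n : ℕ) (ω : Ω) : ℝ :=
  limUnder atTop fun j : ℕ => X ((lam X j ω : ℤ) - (n : ℤ)) ω

end

noncomputable section

-- aux
private def ev : ℤ → (ℤ → ℝ) → ℝ := fun i y => y i

private def Lb : ℕ → (ℤ → ℝ) → ℕ := lam ev

private def Sh (c : ℤ) (y : ℤ → ℝ) : ℤ → ℝ := fun n => y (n + c)

private def MatchSet (k : ℕ) (y : ℤ → ℝ) : Set ℕ :=
  {t : ℕ | 0 < t ∧ ∀ i : ℕ, i ≤ Lb k y →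
    qcell (k + 1) (y ((t : ℤ) + (i : ℤ))) = qcell (k + 1) (y (i : ℤ))}

private lemma Lb_zero (y : ℤ → ℝ) : Lb 0 y = 0 := rfl

private lemma Lb_succ (k : ℕ) (y : ℤ → ℝ) :
    Lb (k + 1) y = Lb k y + sInf (MatchSet k y) := rfl

private lemma floor_half (r : ℝ) : ⌊r⌋ = ⌊2 * r⌋ / 2 := by
  set a := ⌊2 * r⌋ with ha
  have ha1 : (a : ℝ) ≤ 2 * r := Int.floor_le _
  have ha2 : 2 * r < a + 1 := Int.lt_floor_add_one _
  have h1 : 2 * (a / 2) ≤ a := by omega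
  have h2 : a ≤ 2 * (a / 2) + 1 := by omega
  rw [Int.floor_eq_iff]
  · constructor
    · have : ((2 * (a / 2) : ℤ) : ℝ) ≤ (a : ℝ) := by exact_mod_cast h1
      push_cast at this ⊢
      linarith
    · have : ((a : ℤ) : ℝ) ≤ ((2 * (a / 2) + 1 : ℤ) : ℝ) := by exact_mod_cast h2
      push_cast at this ⊢
      linarith

private lemma qcell_succ (k : ℕ) (x : ℝ) : qcell k x = qcell (k + 1) x / 2 := by
  unfold qcell
  rw [show x * 2 ^ (k + 1) = 2 * (x * 2 ^ k) by ring]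
  exact floor_half _

private lemma qcell_coarsen (k : ℕ) (x₁ x₂ : ℝ) (h : qcell (k + 1) x₁ = qcell (k + 1) x₂) :
    qcell k x₁ = qcell k x₂ := by
  rw [qcell_succ k x₁, qcell_succ k x₂, h]

private def GoodSeq (y : ℤ → ℝ) : Prop := ∀ k : ℕ, (MatchSet k y).Nonempty

private def TotGood (y : ℤ → ℝ) : Prop := ∀ c : ℤ, GoodSeq (Sh c y)

private lemma lemA : ∀ (k : ℕ) (z w : ℤ → ℝ),
    (∀ j, j < k → (MatchSet j z).Nonempty) →
    (∀ i : ℕ, i ≤ Lb k z → qcell k (w (i : ℤ)) = qcell k (z (i : ℤ))) →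
    Lb k w = Lb k z := by
  intro k
  induction k with
  | zero => intro z w _ _; rfl
  | succ k ih =>
    intro z w hg h
    have hsum : Lb (k + 1) z = Lb k z + sInf (MatchSet k z) := Lb_succ k z
    have hle : Lb k z ≤ Lb (k + 1) z := by omega
    have ha : Lb k w = Lb k z :=
      ih z w (fun j hj => hg j (hj.trans (Nat.lt_succ_self k)))
        (fun i hi => qcell_coarsen _ _ _ (h i (hi.trans hle)))
    obtain ⟨hτpos, hmz⟩ := Nat.sInf_mem (hg k (Nat.lt_succ_self k))
    set τ := sInf (MatchSet k z) with hτdef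
    have hτw : τ ∈ MatchSet k w := by
      refine ⟨hτpos, fun i hi => ?_⟩
      rw [ha] at hi
      have h1 : qcell (k + 1) (w ((τ : ℤ) + (i : ℤ))) = qcell (k + 1) (z ((τ : ℤ) + (i : ℤ))) := by
        have := h (τ + i) (by omega)
        rwa [Nat.cast_add] at this
      calc qcell (k + 1) (w ((τ : ℤ) + (i : ℤ)))
          = qcell (k + 1) (z ((τ : ℤ) + (i : ℤ))) := h1
        _ = qcell (k + 1) (z (i : ℤ)) := hmz i hi
        _ = qcell (k + 1) (w (i : ℤ)) := (h i (by omega)).symm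
    have hτlow : ∀ t ∈ MatchSet k w, τ ≤ t := by
      rintro t ⟨htpos, hmw⟩
      by_contra hlt
      push_neg at hlt
      have htz : t ∈ MatchSet k z := by
        refine ⟨htpos, fun i hi => ?_⟩
        have h1 : qcell (k + 1) (z ((t : ℤ) + (i : ℤ))) = qcell (k + 1) (w ((t : ℤ) + (i : ℤ))) := by
          have := h (t + i) (by omega)
          rw [Nat.cast_add] at this
          exact this.symm
        calc qcell (k + 1) (z ((t : ℤ) + (i : ℤ)))
            = qcell (k + 1) (w ((t : ℤ) + (i : ℤ))) := h1
          _ = qcell (k + 1) (w (i : ℤ)) := hmw i (by omega)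
          _ = qcell (k + 1) (z (i : ℤ)) := h i (by omega)
      exact absurd (Nat.sInf_le htz) (by omega)
    have hsw : sInf (MatchSet k w) = τ :=
      le_antisymm (Nat.sInf_le hτw) (le_csInf ⟨τ, hτw⟩ hτlow)
    rw [Lb_succ, Lb_succ, ha, hsw]

private lemma lemStep (k : ℕ) (y : ℤ → ℝ) (hTG : TotGood y) (m : ℕ)
    (hm : Lb (k + 1) (Sh (-(m : ℤ)) y) = m) :
    ∃ a : ℕ, Lb k (Sh (-(m : ℤ)) y) = a ∧ a < m ∧
      Lb k (Sh (-(a : ℤ)) y) = a ∧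
      (∀ i : ℕ, i ≤ a → qcell (k + 1) (y ((i : ℤ) - (a : ℤ))) = qcell (k + 1) (y ((i : ℤ) - (m : ℤ)))) := by
  set z := Sh (-(m : ℤ)) y with hz
  have hGz : GoodSeq z := hTG _
  obtain ⟨hτpos, hmz⟩ := Nat.sInf_mem (hGz k)
  set τ := sInf (MatchSet k z) with hτ
  set a := Lb k z with hadef
  have hsum : a + τ = m := by rw [← hm, Lb_succ]
  have key1 : ∀ i : ℕ, i ≤ a →
      qcell (k + 1) (y ((i : ℤ) - (a : ℤ))) = qcell (k + 1) (y ((i : ℤ) - (m : ℤ))) := by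
    intro i hi
    have h2 := hmz i hi
    have e1 : z ((τ : ℤ) + (i : ℤ)) = y ((i : ℤ) - (a : ℤ)) := by
      show y ((τ : ℤ) + (i : ℤ) + -(m : ℤ)) = y ((i : ℤ) - (a : ℤ))
      congr 1
      omega
    have e2 : z (i : ℤ) = y ((i : ℤ) - (m : ℤ)) := by
      show y ((i : ℤ) + -(m : ℤ)) = y ((i : ℤ) - (m : ℤ))
      congr 1
    rw [e1, e2] at h2
    exact h2
  have hW : Lb k (Sh (-(a : ℤ)) y) = a := by
    apply lemA k z (Sh (-(a : ℤ)) y) (fun j _ => hGz j)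
    intro i hi
    have hq : qcell (k + 1) (Sh (-(a : ℤ)) y (i : ℤ)) = qcell (k + 1) (z (i : ℤ)) := by
      show qcell (k + 1) (y ((i : ℤ) + -(a : ℤ))) = qcell (k + 1) (y ((i : ℤ) + -(m : ℤ)))
      rw [show (i : ℤ) + -(a : ℤ) = (i : ℤ) - (a : ℤ) by ring,
        show (i : ℤ) + -(m : ℤ) = (i : ℤ) - (m : ℤ) by ring]
      exact key1 i hi
    exact qcell_coarsen _ _ _ hq
  exact ⟨a, rfl, by omega, hW, key1⟩

private lemma lemB : ∀ (k : ℕ) (y : ℤ → ℝ), TotGood y → ∀ m m' : ℕ,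
    Lb k (Sh (-(m : ℤ)) y) = m → Lb k (Sh (-(m' : ℤ)) y) = m' → m = m' := by
  intro k
  induction k with
  | zero =>
    intro y _ m m' hm hm'
    rw [Lb_zero] at hm hm'
    omega
  | succ k ih =>
    have main : ∀ (y : ℤ → ℝ), TotGood y → ∀ m m' : ℕ, m ≤ m' →
        Lb (k + 1) (Sh (-(m : ℤ)) y) = m → Lb (k + 1) (Sh (-(m' : ℤ)) y) = m' → m = m' := by
      intro y hTG m m' hle hm hm'
      obtain ⟨a, ha, ham, haW, key1⟩ := lemStep k y hTG m hm
      obtain ⟨a', ha', ham', haW', key1'⟩ := lemStep k y hTG m' hm'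
      have haa : a = a' := ih y hTG a a' haW haW'
      by_contra hne
      have hlt : m < m' := lt_of_le_of_ne hle hne
      set z' := Sh (-(m' : ℤ)) y with hz'
      have hGz' : GoodSeq z' := hTG _
      have hmem : (m' - m) ∈ MatchSet k z' := by
        refine ⟨by omega, fun i hi => ?_⟩
        rw [ha'] at hi
        have e1 : z' ((((m' - m : ℕ)) : ℤ) + (i : ℤ)) = y ((i : ℤ) - (m : ℤ)) := by
          show y ((((m' - m : ℕ)) : ℤ) + (i : ℤ) + -(m' : ℤ)) = y ((i : ℤ) - (m : ℤ))
          congr 1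
          omega
        have e2 : z' (i : ℤ) = y ((i : ℤ) - (m' : ℤ)) := by
          show y ((i : ℤ) + -(m' : ℤ)) = y ((i : ℤ) - (m' : ℤ))
          congr 1
        rw [e1, e2]
        calc qcell (k + 1) (y ((i : ℤ) - (m : ℤ)))
            = qcell (k + 1) (y ((i : ℤ) - (a : ℤ))) := (key1 i (by omega)).symm
          _ = qcell (k + 1) (y ((i : ℤ) - (a' : ℤ))) := by rw [haa]
          _ = qcell (k + 1) (y ((i : ℤ) - (m' : ℤ))) := key1' i (by omega)
      have hτ'le : sInf (MatchSet k z') ≤ m' - m := Nat.sInf_le hmem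
      have hsum' : a' + sInf (MatchSet k z') = m' := by rw [← ha', ← Lb_succ]; exact hm'
      omega
    intro y hTG m m' hm hm'
    rcases le_total m m' with h | h
    · exact main y hTG m m' h hm hm'
    · exact (main y hTG m' m h hm' hm).symm
private lemma meas_Sh (c : ℤ) : Measurable (Sh c) :=
  measurable_pi_lambda _ fun n => measurable_pi_apply _

private lemma meas_qcell (k : ℕ) : Measurable (qcell k) :=
  (measurable_id.mul_const _).floor

private lemma measSet_eq_int {f g : (ℤ → ℝ) → ℤ} (hf : Measurable f) (hg : Measurable g) :
    MeasurableSet {y | f y = g y} := by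
  have h : {y | f y = g y} = ⋃ z : ℤ, f ⁻¹' {z} ∩ g ⁻¹' {z} := by
    ext y
    simp only [Set.mem_setOf_eq, Set.mem_iUnion, Set.mem_inter_iff, Set.mem_preimage,
      Set.mem_singleton_iff]
    exact ⟨fun h => ⟨f y, rfl, h.symm⟩, fun ⟨z, h1, h2⟩ => h1.trans h2.symm⟩
  rw [h]
  exact MeasurableSet.iUnion fun z =>
    (hf (measurableSet_singleton z)).inter (hg (measurableSet_singleton z))

private lemma measSet_matchMem (k t : ℕ) (hLb : Measurable (Lb k)) :
    MeasurableSet {y | t ∈ MatchSet k y} := by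
  have h : {y | t ∈ MatchSet k y} =
      {y : ℤ → ℝ | 0 < t} ∩ ⋃ a : ℕ, (Lb k ⁻¹' {a} ∩ ⋂ i : ℕ, ⋂ _ : i ≤ a,
        {y | qcell (k + 1) (y ((t : ℤ) + (i : ℤ))) = qcell (k + 1) (y (i : ℤ))}) := by
    ext y
    simp only [MatchSet, Set.mem_setOf_eq, Set.mem_inter_iff, Set.mem_iUnion, Set.mem_iInter,
      Set.mem_preimage, Set.mem_singleton_iff]
    constructor
    · rintro ⟨h1, h2⟩
      exact ⟨h1, Lb k y, rfl, fun i hi => h2 i hi⟩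
    · rintro ⟨h1, a, ha, h2⟩
      exact ⟨h1, fun i hi => h2 i (by omega)⟩
  rw [h]
  refine (MeasurableSet.const _).inter (MeasurableSet.iUnion fun a =>
    (hLb (measurableSet_singleton a)).inter (MeasurableSet.iInter fun i =>
      MeasurableSet.iInter fun _ =>
        measSet_eq_int ((meas_qcell _).comp (measurable_pi_apply _))
          ((meas_qcell _).comp (measurable_pi_apply _))))

private lemma meas_sInf_meas {p : ℕ → (ℤ → ℝ) → Prop} (hp : ∀ t, MeasurableSet {y | p t y}) :
    Measurable fun y => sInf {t | p t y} := by
  apply measurable_to_countable'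
  intro n
  have h : (fun y => sInf {t | p t y}) ⁻¹' {n} =
      ({y | p n y} ∩ ⋂ m : ℕ, ⋂ _ : m < n, {y | p m y}ᶜ) ∪
      ((⋂ t : ℕ, {y | p t y}ᶜ) ∩ {y : ℤ → ℝ | n = 0}) := by
    ext y
    simp only [Set.mem_preimage, Set.mem_singleton_iff, Set.mem_union, Set.mem_inter_iff,
      Set.mem_iInter, Set.mem_compl_iff, Set.mem_setOf_eq]
    constructor
    · intro hn
      by_cases hne : {t | p t y}.Nonempty
      · left
        exact ⟨hn ▸ Nat.sInf_mem hne, fun m hm => Nat.notMem_of_lt_sInf (hn ▸ hm)⟩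
      · right
        refine ⟨fun t ht => hne ⟨t, ht⟩, ?_⟩
        rw [← hn, Set.not_nonempty_iff_eq_empty.1 hne, Nat.sInf_empty]
    · rintro (⟨h1, h2⟩ | ⟨h1, h2⟩)
      · refine le_antisymm (Nat.sInf_le h1) ?_
        by_contra hlt
        push_neg at hlt
        have hmem : sInf {t | p t y} ∈ {t | p t y} := Nat.sInf_mem ⟨n, h1⟩
        exact h2 _ hlt hmem
      · rw [h2]
        rw [show {t | p t y} = ∅ from Set.eq_empty_iff_forall_notMem.2 fun t ht => h1 t ht]
        exact Nat.sInf_empty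
  rw [h]
  exact ((hp n).inter (MeasurableSet.iInter fun m => MeasurableSet.iInter fun _ =>
    (hp m).compl)).union ((MeasurableSet.iInter fun t => (hp t).compl).inter
      (MeasurableSet.const _))

private lemma meas_Lb : ∀ k : ℕ, Measurable (Lb k)
  | 0 => measurable_const
  | (k + 1) => by
    have ih := meas_Lb k
    have h : Lb (k + 1) = fun y => Lb k y + sInf {t | t ∈ MatchSet k y} := by
      funext y
      exact Lb_succ k y
    rw [h]
    exact ih.add (meas_sInf_meas fun t => measSet_matchMem k t ih)

private def GoodSet : Set (ℤ → ℝ) := {y | GoodSeq y}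

private lemma meas_GoodSet : MeasurableSet GoodSet := by
  have h : GoodSet = ⋂ k : ℕ, ⋃ t : ℕ, {y | t ∈ MatchSet k y} := by
    ext y
    simp only [GoodSet, GoodSeq, Set.mem_setOf_eq, Set.mem_iInter, Set.mem_iUnion, Set.Nonempty]
  rw [h]
  exact MeasurableSet.iInter fun k => MeasurableSet.iUnion fun t =>
    measSet_matchMem k t (meas_Lb k)

private lemma meas_nat_cases {g : (ℤ → ℝ) → ℕ} (hg : Measurable g)
    {h : ℕ → (ℤ → ℝ) → ℝ} (hh : ∀ m, Measurable (h m)) :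
    Measurable fun y => h (g y) y := by
  intro A hA
  have he : (fun y => h (g y) y) ⁻¹' A = ⋃ m : ℕ, (g ⁻¹' {m} ∩ (h m) ⁻¹' A) := by
    ext y
    simp only [Set.mem_preimage, Set.mem_iUnion, Set.mem_inter_iff, Set.mem_singleton_iff]
    constructor
    · intro hy
      exact ⟨g y, rfl, hy⟩
    · rintro ⟨m, h1, h2⟩
      rw [h1]
      exact h2
  rw [he]
  exact MeasurableSet.iUnion fun m => (hg (measurableSet_singleton m)).inter (hh m hA)
private lemma lam_comp {Ω : Type*} (X : ℤ → Ω → ℝ) :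
    ∀ (n : ℕ) (ω : Ω), lam X n ω = Lb n (fun i => X i ω) := by
  intro n
  induction n with
  | zero => intro ω; rfl
  | succ n ihn =>
    intro ω
    show lam X n ω + _ = Lb n (fun i => X i ω) + _
    rw [ihn ω]
    rfl

private theorem stmt7_aux {Ω : Type*} [MeasurableSpace Ω] (μ : Measure Ω) [IsProbabilityMeasure μ]
    (X : ℤ → Ω → ℝ) (hmeas : ∀ i, Measurable (X i))
    (hstat : ∀ k : ℤ, μ.map (fun ω => fun i : ℤ => X (i + k) ω) = μ.map (fun ω => fun i : ℤ => X i ω))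
    (hfin : ∀ᵐ ω ∂μ, ∀ n : ℕ,
      {t : ℕ | 0 < t ∧ ∀ i : ℕ, i ≤ lam X n ω →
        qcell (n + 1) (X ((t : ℤ) + (i : ℤ)) ω) = qcell (n + 1) (X (i : ℤ) ω)}.Nonempty) :
    ∀ k : ℕ,
      μ.map (fun ω => fun n : ℤ => X ((lam X k ω : ℤ) + n) ω) =
      μ.map (fun ω => fun n : ℤ => X n ω) := by
  intro k
  have hXX : Measurable (fun ω => fun i : ℤ => X i ω) := measurable_pi_lambda _ fun i => hmeas i
  set XX : Ω → (ℤ → ℝ) := fun ω => fun i : ℤ => X i ω with hXXdef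
  set ν : Measure (ℤ → ℝ) := μ.map XX with hν
  haveI : IsProbabilityMeasure ν := Measure.isProbabilityMeasure_map hXX.aemeasurable
  -- invariance
  have hinv : ∀ (c : ℤ) (A : Set (ℤ → ℝ)), MeasurableSet A → ν (Sh c ⁻¹' A) = ν A := by
    intro c A hA
    have h1 : ν.map (Sh c) = ν := by
      rw [hν, Measure.map_map (meas_Sh c) hXX]
      have h2 : Sh c ∘ XX = fun ω => fun i : ℤ => X (i + c) ω := rfl
      rw [h2, hstat c]
    conv_rhs => rw [← h1]
    rw [Measure.map_apply (meas_Sh c) hA]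
  -- measurability of the recentring map
  have hG : Measurable (fun y : ℤ → ℝ => Sh ((Lb k y : ℤ)) y) := by
    apply measurable_pi_lambda
    intro n
    exact meas_nat_cases (meas_Lb k) (fun m => measurable_pi_apply (n + (m : ℤ)))
  set G : (ℤ → ℝ) → (ℤ → ℝ) := fun y => Sh ((Lb k y : ℤ)) y with hGdef
  -- rewrite goal
  have hmap : μ.map (fun ω => fun n : ℤ => X ((lam X k ω : ℤ) + n) ω) = ν.map G := by
    rw [hν, Measure.map_map hG hXX]
    congr 1
    funext ω
    funext n
    show X ((lam X k ω : ℤ) + n) ω = X (n + (Lb k (XX ω) : ℤ)) ω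
    rw [← lam_comp X k ω]
    congr 1
    ring
  rw [hmap]
  show ν.map G = ν
  -- the partition events
  set E : ℕ → Set (ℤ → ℝ) := fun m => Lb k ⁻¹' {m} with hE
  set F : ℕ → Set (ℤ → ℝ) := fun m => Sh (-(m : ℤ)) ⁻¹' E m with hF
  have hEm : ∀ m, MeasurableSet (E m) := fun m => meas_Lb k (measurableSet_singleton m)
  have hFm : ∀ m, MeasurableSet (F m) := fun m => meas_Sh _ (hEm m)
  set TG : Set (ℤ → ℝ) := ⋂ c : ℤ, Sh c ⁻¹' GoodSet with hTGdef
  have hTGm : MeasurableSet TG := MeasurableSet.iInter fun c => meas_Sh c meas_GoodSet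
  -- a.e. goodness
  have hGood0 : ν GoodSetᶜ = 0 := by
    have hfin' : ∀ᵐ ω ∂μ, XX ω ∈ GoodSet := by
      filter_upwards [hfin] with ω hω
      intro n
      have h1 := hω n
      rw [lam_comp X n ω] at h1
      exact h1
    rw [hν, Measure.map_apply hXX meas_GoodSet.compl]
    exact hfin'
  have hTG0 : ν TGᶜ = 0 := by
    have h1 : TGᶜ = ⋃ c : ℤ, Sh c ⁻¹' GoodSetᶜ := by
      rw [hTGdef, Set.compl_iInter]
      simp [Set.preimage_compl]
    rw [h1]
    refine measure_iUnion_null fun c => ?_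
    rw [show Sh c ⁻¹' GoodSetᶜ = Sh c ⁻¹' (GoodSetᶜ) from rfl, hinv c _ meas_GoodSet.compl]
    exact hGood0
  have interU : ∀ (A U : Set (ℤ → ℝ)), MeasurableSet U → ν Uᶜ = 0 → ν (A ∩ U) = ν A := by
    intro A U hU h0
    have h1 : ν (A \ U) = 0 := measure_mono_null (fun y hy => hy.2) h0
    rw [← measure_inter_add_diff A hU, h1, add_zero]
  have hTGmem : ∀ y ∈ TG, TotGood y := fun y hy c => Set.mem_iInter.1 hy c
  have hFmem : ∀ (m : ℕ) (y : ℤ → ℝ), y ∈ F m ↔ Lb k (Sh (-(m : ℤ)) y) = m := by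
    intro m y
    rw [hF]
    rfl
  have hFdisj : Pairwise (Function.onFun Disjoint fun m : ℕ => F m ∩ TG) := by
    intro m m' hne
    rw [Function.onFun, Set.disjoint_left]
    rintro y ⟨hy1, hy2⟩ ⟨hy1', _⟩
    exact hne (lemB k y (hTGmem y hy2) m m' ((hFmem m y).1 hy1) ((hFmem m' y).1 hy1'))
  have hEdisj : Pairwise (Function.onFun Disjoint E) := by
    intro m m' hne
    rw [Function.onFun, Set.disjoint_left]
    rintro y hy1 hy1'
    exact hne ((Set.mem_singleton_iff.1 hy1).symm.trans (Set.mem_singleton_iff.1 hy1'))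
  have hFE : ∀ m : ℕ, ν (F m) = ν (E m) := fun m => hinv _ _ (hEm m)
  set U : Set (ℤ → ℝ) := (⋃ m : ℕ, F m) ∩ TG with hUdef
  have hUm : MeasurableSet U := (MeasurableSet.iUnion hFm).inter hTGm
  have hU1 : ν U = 1 := by
    have h1 : U = ⋃ m : ℕ, (F m ∩ TG) := by rw [hUdef, Set.iUnion_inter]
    rw [h1, measure_iUnion hFdisj fun m => (hFm m).inter hTGm]
    have h2 : ∀ m : ℕ, ν (F m ∩ TG) = ν (E m) := fun m => by
      rw [interU _ _ hTGm hTG0, hFE]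
    rw [tsum_congr h2, ← measure_iUnion hEdisj hEm]
    have h3 : ⋃ m : ℕ, E m = Set.univ := by
      ext y
      simp only [Set.mem_iUnion, Set.mem_univ, iff_true]
      exact ⟨Lb k y, rfl⟩
    rw [h3, measure_univ]
  have hU0 : ν Uᶜ = 0 := by
    rw [prob_compl_eq_one_sub hUm, hU1, tsub_self]
  -- final computation
  refine Measure.ext fun B hB => ?_
  rw [Measure.map_apply hG hB]
  have hdecomp : G ⁻¹' B = ⋃ m : ℕ, (E m ∩ Sh (m : ℤ) ⁻¹' B) := by
    ext y
    simp only [Set.mem_preimage, Set.mem_iUnion, Set.mem_inter_iff, hE,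
      Set.mem_singleton_iff]
    constructor
    · intro h
      exact ⟨Lb k y, rfl, h⟩
    · rintro ⟨m, rfl, h2⟩
      exact h2
  have hdisj2 : Pairwise (Function.onFun Disjoint fun m : ℕ => E m ∩ Sh (m : ℤ) ⁻¹' B) := by
    intro m m' hne
    exact (hEdisj hne).mono Set.inter_subset_left Set.inter_subset_left
  rw [hdecomp, measure_iUnion hdisj2 fun m => (hEm m).inter (meas_Sh _ hB)]
  have hterm : ∀ m : ℕ, ν (E m ∩ Sh (m : ℤ) ⁻¹' B) = ν (F m ∩ B) := by
    intro m
    have hset : E m ∩ Sh (m : ℤ) ⁻¹' B = Sh (m : ℤ) ⁻¹' (F m ∩ B) := by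
      ext y
      have hid : Sh (-(m : ℤ)) (Sh (m : ℤ) y) = y := by
        funext n
        show y (n + -(m : ℤ) + (m : ℤ)) = y n
        congr 1
        ring
      simp only [Set.mem_inter_iff, Set.mem_preimage, hE, hF, Set.mem_singleton_iff, hid]
    rw [hset, hinv _ _ ((hFm m).inter hB)]
  rw [tsum_congr hterm]
  have h1 : ∀ m : ℕ, ν (F m ∩ B) = ν ((F m ∩ B) ∩ U) := fun m =>
    (interU _ _ hUm hU0).symm
  have hsub3 : ∀ m : ℕ, ((F m ∩ B) ∩ U) ⊆ (F m ∩ TG) := fun m y hy => ⟨hy.1.1, hy.2.2⟩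
  have hdisj3 : Pairwise (Function.onFun Disjoint fun m : ℕ => (F m ∩ B) ∩ U) := by
    intro m m' hne
    exact (hFdisj hne).mono (hsub3 m) (hsub3 m')
  rw [tsum_congr h1, ← measure_iUnion hdisj3 fun m => ((hFm m).inter hB).inter hUm]
  have h2 : ⋃ m : ℕ, ((F m ∩ B) ∩ U) = B ∩ U := by
    ext y
    simp only [Set.mem_iUnion, Set.mem_inter_iff]
    constructor
    · rintro ⟨m, ⟨_, hyB⟩, hyU⟩
      exact ⟨hyB, hyU⟩
    · rintro ⟨hyB, hyU⟩
      obtain ⟨m, hm⟩ := Set.mem_iUnion.1 hyU.1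
      exact ⟨m, ⟨⟨hm, hyB⟩, hyU⟩⟩
  rw [h2, interU _ _ hUm hU0]

/-- For every `k ≥ 0`, the time series `{X_{λ_k + n}}_{n ∈ ℤ}`, obtained
by re-centering the process at the stopping time `λ_k`, has the same distribution as the
original process `{X_n}_{n ∈ ℤ}`. -/
theorem stmt7 {Ω : Type*} [MeasurableSpace Ω] (μ : Measure Ω) [IsProbabilityMeasure μ]
    (X : ℤ → Ω → ℝ) (hmeas : ∀ i, Measurable (X i))
    (hstat : IsStationaryProc μ X)
    (hfin : LamFinite μ X) :
    ∀ k : ℕ,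
      μ.map (fun ω => fun n : ℤ => X ((lam X k ω : ℤ) + n) ω) =
      μ.map (fun ω => fun n : ℤ => X n ω) := by
  intro k
  exact stmt7_aux μ X hmeas hstat hfin k

end
end

section
/- For every i ≥ 0, almost surely [tilde X_{-i}]^{j+1} = [X_{λ_j − i}]^{j+1} for all j ≥ i; that is, the limiting value tilde X_{-i} lies in the same cell of the dyadic partition P_{j+1} as X_{λ_j − i} for every j ≥ i. -/
open MeasureTheory Filter Topology

noncomputable section
namespace Stmt8Aux

lemma two_pow_pos' (k : ℕ) : (0:ℝ) < 2 ^ k := by positivity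

lemma qcell_le (k : ℕ) (x : ℝ) : (qcell k x : ℝ) / 2 ^ k ≤ x := by
  rw [div_le_iff₀ (two_pow_pos' k)]
  exact Int.floor_le _

lemma lt_qcell (k : ℕ) (x : ℝ) : x < ((qcell k x : ℝ) + 1) / 2 ^ k := by
  rw [lt_div_iff₀ (two_pow_pos' k)]
  exact Int.lt_floor_add_one (x * 2 ^ k)

lemma qcell_eq_iff {k : ℕ} {x : ℝ} {c : ℤ} :
    qcell k x = c ↔ (c : ℝ) / 2 ^ k ≤ x ∧ x < ((c : ℝ) + 1) / 2 ^ k := by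
  rw [qcell, Int.floor_eq_iff, div_le_iff₀ (two_pow_pos' k), lt_div_iff₀ (two_pow_pos' k)]

lemma qcell_coarsen {m k : ℕ} (hmk : m ≤ k) {x x' : ℝ} (h : qcell k x = qcell k x') :
    qcell m x = qcell m x' := by
  have key : ∀ z : ℝ, (2:ℤ) ^ (k - m) * qcell m z ≤ qcell k z ∧
      qcell k z < 2 ^ (k - m) * (qcell m z + 1) := by
    intro z
    have h1 : (qcell m z : ℝ) ≤ z * 2 ^ m := Int.floor_le _
    have h2 : z * 2 ^ m < (qcell m z : ℝ) + 1 := Int.lt_floor_add_one _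
    have hpow : (2:ℝ) ^ m * 2 ^ (k - m) = 2 ^ k := by
      rw [← pow_add]; congr 1; omega
    have hpp : (0:ℝ) < 2 ^ (k - m) := two_pow_pos' _
    constructor
    · show _ ≤ ⌊z * 2 ^ k⌋
      apply Int.le_floor.2
      push_cast
      calc (2:ℝ) ^ (k - m) * (qcell m z : ℝ) = (qcell m z : ℝ) * 2 ^ (k - m) := by ring
        _ ≤ (z * 2 ^ m) * 2 ^ (k - m) := mul_le_mul_of_nonneg_right h1 hpp.le
        _ = z * 2 ^ k := by rw [mul_assoc, hpow]
    · show ⌊z * 2 ^ k⌋ < _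
      apply Int.floor_lt.2
      push_cast
      calc z * 2 ^ k = (z * 2 ^ m) * 2 ^ (k - m) := by rw [mul_assoc, hpow]
        _ < ((qcell m z : ℝ) + 1) * 2 ^ (k - m) := mul_lt_mul_of_pos_right h2 hpp
        _ = 2 ^ (k - m) * ((qcell m z : ℝ) + 1) := by ring
  obtain ⟨a1, a2⟩ := key x
  obtain ⟨b1, b2⟩ := key x'
  rw [h] at a1 a2
  have hD : (0:ℤ) < 2 ^ (k - m) := by positivity
  have l1 : qcell m x ≤ qcell m x' := by
    have : (2:ℤ) ^ (k - m) * qcell m x < 2 ^ (k - m) * (qcell m x' + 1) := lt_of_le_of_lt a1 b2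
    have := (mul_lt_mul_iff_right₀ hD).1 this
    omega
  have l2 : qcell m x' ≤ qcell m x := by
    have : (2:ℤ) ^ (k - m) * qcell m x' < 2 ^ (k - m) * (qcell m x + 1) := lt_of_le_of_lt b1 a2
    have := (mul_lt_mul_iff_right₀ hD).1 this
    omega
  omega

lemma abs_sub_lt_of_qcell_eq {k : ℕ} {x x' : ℝ} (h : qcell k x = qcell k x') :
    |x - x'| < 1 / 2 ^ k := by
  have h1 := qcell_le k x
  have h2 := lt_qcell k x
  have h3 := qcell_le k x'
  have h4 := lt_qcell k x'
  rw [h] at h1 h2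
  have hd : ((qcell k x' : ℝ) + 1) / 2 ^ k - (qcell k x' : ℝ) / 2 ^ k = 1 / 2 ^ k := by
    ring
  rw [abs_sub_lt_iff]
  constructor <;> linarith

/-! ### The path-space version of `lam` -/

/-- Matching set for the recursion, on a two-sided path. -/
def mset (y : ℤ → ℝ) (n L : ℕ) : Set ℕ :=
  {t : ℕ | 0 < t ∧ ∀ i : ℕ, i ≤ L →
    qcell (n + 1) (y ((t : ℤ) + (i : ℤ))) = qcell (n + 1) (y (i : ℤ))}

/-- The stopping times, as a function of the path. -/
def plam (y : ℤ → ℝ) : ℕ → ℕ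
  | 0 => 0
  | n + 1 => plam y n + sInf (mset y n (plam y n))

lemma lam_eq_plam {Ω : Type*} (X : ℤ → Ω → ℝ) (ω : Ω) :
    ∀ n, lam X n ω = plam (fun s => X s ω) n := by
  intro n
  induction n with
  | zero => rfl
  | succ n ih =>
    show lam X n ω + _ = plam (fun s => X s ω) n + _
    rw [ih]
    rfl

lemma plam_mono (y : ℤ → ℝ) : Monotone (plam y) :=
  monotone_nat_of_le_succ fun n => Nat.le_add_right _ _

lemma zero_not_mem_mset (y : ℤ → ℝ) (n L : ℕ) : 0 ∉ mset y n L :=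
  fun h => lt_irrefl 0 h.1

lemma sInf_mset_pos {y : ℤ → ℝ} {n L : ℕ} (h : (mset y n L).Nonempty) :
    0 < sInf (mset y n L) := (Nat.sInf_mem h).1

/-- A "good run": all matching sets used in the first `k` stages are nonempty. -/
def goodRun (y : ℤ → ℝ) (k : ℕ) : Prop :=
  ∀ m, m < k → (mset y m (plam y m)).Nonempty

lemma goodRun_mono {y : ℤ → ℝ} {k k' : ℕ} (h : k' ≤ k) (hg : goodRun y k) :
    goodRun y k' := fun m hm => hg m (lt_of_lt_of_le hm h)

lemma le_plam {y : ℤ → ℝ} {k : ℕ} (hg : goodRun y k) : k ≤ plam y k := by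
  induction k with
  | zero => exact Nat.zero_le _
  | succ k ih =>
    have h1 : k ≤ plam y k := ih (goodRun_mono (Nat.le_succ k) hg)
    have h2 : 0 < sInf (mset y k (plam y k)) := sInf_mset_pos (hg k (Nat.lt_succ_self k))
    show k + 1 ≤ plam y k + sInf (mset y k (plam y k))
    omega

/-- Shift of a path: `shf r y` is the path anchored at `-r`. -/
def shf (r : ℕ) (y : ℤ → ℝ) : ℤ → ℝ := fun s => y (s - (r : ℤ))

/-- Transport: if the initial segment of length `s` of `z₂` matches that of `z₁`
at level `k+1`, and the run of `z₁` reaches exactly `s` at stage `k`, then `z₂`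
has the same run. -/
lemma transport {z₁ z₂ : ℤ → ℝ} {k s : ℕ}
    (hq : ∀ i : ℕ, i ≤ s → qcell (k + 1) (z₂ (i : ℤ)) = qcell (k + 1) (z₁ (i : ℤ)))
    (hgood : goodRun z₁ k) (hks : plam z₁ k = s) :
    (∀ m, m ≤ k → plam z₂ m = plam z₁ m) ∧ goodRun z₂ k := by
  have hq' : ∀ lvl, lvl ≤ k + 1 → ∀ i : ℕ, i ≤ s →
      qcell lvl (z₂ (i : ℤ)) = qcell lvl (z₁ (i : ℤ)) :=
    fun lvl hlvl i hi => qcell_coarsen hlvl (hq i hi)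
  have stage : ∀ m, m < k →
      (mset z₂ m (plam z₁ m)).Nonempty ∧
        sInf (mset z₂ m (plam z₁ m)) = sInf (mset z₁ m (plam z₁ m)) := by
    intro m hm
    set L := plam z₁ m with hL
    have hne : (mset z₁ m L).Nonempty := hgood m hm
    set t₁ := sInf (mset z₁ m L) with ht₁def
    have ht₁mem : t₁ ∈ mset z₁ m L := Nat.sInf_mem hne
    have hsum : plam z₁ (m + 1) = L + t₁ := rfl
    have hbound : L + t₁ ≤ s := by
      rw [← hsum, ← hks]
      exact plam_mono z₁ hm
    have hLs : L ≤ s := le_trans (Nat.le_add_right _ _) hbound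
    have htrans : ∀ t, t + L ≤ s → (t ∈ mset z₂ m L ↔ t ∈ mset z₁ m L) := by
      intro t ht
      have harg : ∀ i : ℕ, i ≤ L →
          qcell (m + 1) (z₂ ((t : ℤ) + (i : ℤ))) = qcell (m + 1) (z₁ ((t : ℤ) + (i : ℤ))) := by
        intro i hi
        have hcast : ((t : ℤ) + (i : ℤ)) = ((t + i : ℕ) : ℤ) := by push_cast; ring
        rw [hcast]
        exact hq' (m + 1) (by omega) (t + i) (by omega)
      have harg0 : ∀ i : ℕ, i ≤ L →
          qcell (m + 1) (z₂ (i : ℤ)) = qcell (m + 1) (z₁ (i : ℤ)) :=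
        fun i hi => hq' (m + 1) (by omega) i (by omega)
      constructor
      · rintro ⟨hpos, hmatch⟩
        exact ⟨hpos, fun i hi => by rw [← harg i hi, hmatch i hi, harg0 i hi]⟩
      · rintro ⟨hpos, hmatch⟩
        exact ⟨hpos, fun i hi => by rw [harg i hi, hmatch i hi, ← harg0 i hi]⟩
    have ht₁z₂ : t₁ ∈ mset z₂ m L := (htrans t₁ (by omega)).2 ht₁mem
    have hne₂ : (mset z₂ m L).Nonempty := ⟨t₁, ht₁z₂⟩
    refine ⟨hne₂, le_antisymm (Nat.sInf_le ht₁z₂) ?_⟩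
    by_contra hlt
    push_neg at hlt
    have hmem₂ := Nat.sInf_mem hne₂
    have : sInf (mset z₂ m L) ∈ mset z₁ m L := (htrans _ (by omega)).1 hmem₂
    exact absurd (Nat.sInf_le this) (by omega)
  have main : ∀ m, m ≤ k → plam z₂ m = plam z₁ m := by
    intro m
    induction m with
    | zero => intro _; rfl
    | succ m ih =>
      intro hm
      have hmk : m < k := hm
      have hL := ih (le_of_lt hmk)
      show plam z₂ m + sInf (mset z₂ m (plam z₂ m)) = plam z₁ m + sInf (mset z₁ m (plam z₁ m))
      rw [hL, (stage m hmk).2]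
  refine ⟨main, fun m hm => ?_⟩
  have := (stage m hm).1
  rwa [← main m (le_of_lt hm)] at this

/-- Key uniqueness: for a fixed path there is at most one `r` such that the
(good) run anchored at `-r` ends exactly at `0` after `k` stages. -/
lemma unique_anchor (y : ℤ → ℝ) : ∀ (k : ℕ) (r r' : ℕ),
    plam (shf r y) k = r → goodRun (shf r y) k →
    plam (shf r' y) k = r' → goodRun (shf r' y) k → r = r' := by
  intro k
  induction k with
  | zero =>
    intro r r' h1 _ h2 _
    have e1 : plam (shf r y) 0 = 0 := rfl
    have e2 : plam (shf r' y) 0 = 0 := rfl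
    omega
  | succ k ih =>
    have key : ∀ r r' : ℕ, plam (shf r y) (k + 1) = r → goodRun (shf r y) (k + 1) →
        plam (shf r' y) (k + 1) = r' → goodRun (shf r' y) (k + 1) → r' < r → False := by
      intro r r' h1 g1 h2 g2 hlt
      set z₁ := shf r y with hz₁
      set z₁' := shf r' y with hz₁'
      set s := plam z₁ k with hs
      set s' := plam z₁' k with hs'
      have hne₁ : (mset z₁ k s).Nonempty := g1 k (Nat.lt_succ_self k)
      have hne₂ : (mset z₁' k s').Nonempty := g2 k (Nat.lt_succ_self k)
      set t₁ := sInf (mset z₁ k s) with ht₁def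
      set t₂ := sInf (mset z₁' k s') with ht₂def
      have ht₁ : t₁ ∈ mset z₁ k s := Nat.sInf_mem hne₁
      have ht₂ : t₂ ∈ mset z₁' k s' := Nat.sInf_mem hne₂
      have hr : s + t₁ = r := h1
      have hr' : s' + t₂ = r' := h2
      have ht₁pos : 0 < t₁ := ht₁.1
      have ht₂pos : 0 < t₂ := ht₂.1
      -- the matched copy of the run of z₁ is anchored at -s
      have hcopy : ∀ i : ℕ, i ≤ s →
          qcell (k + 1) (shf s y (i : ℤ)) = qcell (k + 1) (z₁ (i : ℤ)) := by
        intro i hi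
        have h := ht₁.2 i hi
        have harg : z₁ ((t₁ : ℤ) + (i : ℤ)) = shf s y (i : ℤ) := by
          show y ((t₁ : ℤ) + (i : ℤ) - (r : ℤ)) = y ((i : ℤ) - (s : ℤ))
          congr 1
          omega
        rwa [harg] at h
      obtain ⟨hTm, hTg⟩ := transport hcopy (goodRun_mono (Nat.le_succ k) g1) rfl
      have hQs1 : plam (shf s y) k = s := hTm k le_rfl
      -- the matched copy of the run of z₁' is anchored at -s'
      have hcopy' : ∀ i : ℕ, i ≤ s' →
          qcell (k + 1) (shf s' y (i : ℤ)) = qcell (k + 1) (z₁' (i : ℤ)) := by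
        intro i hi
        have h := ht₂.2 i hi
        have harg : z₁' ((t₂ : ℤ) + (i : ℤ)) = shf s' y (i : ℤ) := by
          show y ((t₂ : ℤ) + (i : ℤ) - (r' : ℤ)) = y ((i : ℤ) - (s' : ℤ))
          congr 1
          omega
        rwa [harg] at h
      obtain ⟨hTm', hTg'⟩ := transport hcopy' (goodRun_mono (Nat.le_succ k) g2) rfl
      have hQs2 : plam (shf s' y) k = s' := hTm' k le_rfl
      have hss' : s = s' := ih s s' hQs1 hTg hQs2 hTg'
      -- now r - r' is a strictly smaller match for the run of z₁, contradiction
      have hsr' : s < r' := by omega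
      have humem : (r - r') ∈ mset z₁ k s := by
        refine ⟨by omega, fun i hi => ?_⟩
        have e1 : z₁ (((r - r' : ℕ) : ℤ) + (i : ℤ)) = z₁' (i : ℤ) := by
          show y (((r - r' : ℕ) : ℤ) + (i : ℤ) - (r : ℤ)) = y ((i : ℤ) - (r' : ℤ))
          congr 1
          omega
        have e2 : z₁' ((t₂ : ℤ) + (i : ℤ)) = shf s y (i : ℤ) := by
          show y ((t₂ : ℤ) + (i : ℤ) - (r' : ℤ)) = y ((i : ℤ) - (s : ℤ))
          congr 1
          omega
        have h3 := ht₂.2 i (by omega)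
        rw [e2] at h3
        rw [e1, ← h3, hcopy i hi]
      have := Nat.sInf_le humem
      omega
    intro r r' h1 g1 h2 g2
    rcases lt_trichotomy r r' with h | h | h
    · exact (key r' r h2 g2 h1 g1 h).elim
    · exact h
    · exact (key r r' h1 g1 h2 g2 h).elim

/-! ### Measurability -/

lemma measurable_qcell (k : ℕ) : Measurable fun x : ℝ => qcell k x :=
  (measurable_id.mul_const _).floor

lemma measurableSet_qcell_eq (c : ℕ) (a b : ℤ) :
    MeasurableSet {y : ℤ → ℝ | qcell c (y a) = qcell c (y b)} := by
  have h1 : Measurable fun y : ℤ → ℝ => (qcell c (y a), qcell c (y b)) :=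
    ((measurable_qcell c).comp (measurable_pi_apply a)).prodMk
      ((measurable_qcell c).comp (measurable_pi_apply b))
  have h2 : MeasurableSet {p : ℤ × ℤ | p.1 = p.2} := by
    have : {p : ℤ × ℤ | p.1 = p.2} = ⋃ n : ℤ, {(n, n)} := by
      ext ⟨a, b⟩
      simp only [Set.mem_setOf_eq, Set.mem_iUnion, Set.mem_singleton_iff, Prod.mk.injEq]
      constructor
      · rintro rfl; exact ⟨a, rfl, rfl⟩
      · rintro ⟨n, rfl, rfl⟩; rfl
    rw [this]
    exact MeasurableSet.iUnion fun n => measurableSet_singleton _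
  exact h1 h2

lemma measurableSet_mem_mset (n L t : ℕ) :
    MeasurableSet {y : ℤ → ℝ | t ∈ mset y n L} := by
  have : {y : ℤ → ℝ | t ∈ mset y n L} =
      {_y : ℤ → ℝ | 0 < t} ∩ ⋂ (i : ℕ) (_ : i ≤ L),
        {y : ℤ → ℝ | qcell (n + 1) (y ((t : ℤ) + (i : ℤ))) = qcell (n + 1) (y (i : ℤ))} := by
    ext y
    simp only [Set.mem_setOf_eq, Set.mem_inter_iff, Set.mem_iInter, mset]
  rw [this]
  exact (MeasurableSet.const _).inter
    (MeasurableSet.iInter fun i => MeasurableSet.iInter fun _ => measurableSet_qcell_eq _ _ _)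

lemma measurableSet_sInf_mset (n L v : ℕ) :
    MeasurableSet {y : ℤ → ℝ | sInf (mset y n L) = v} := by
  rcases Nat.eq_zero_or_pos v with rfl | hv
  · have : {y : ℤ → ℝ | sInf (mset y n L) = 0} = ⋂ u : ℕ, {y | u ∈ mset y n L}ᶜ := by
      ext y
      simp only [Set.mem_setOf_eq, Set.mem_iInter, Set.mem_compl_iff]
      constructor
      · intro h u hu
        rcases Nat.sInf_eq_zero.1 h with h' | h'
        · exact zero_not_mem_mset y n L h'
        · rw [h'] at hu; exact hu
      · intro h
        exact Nat.sInf_eq_zero.2 (Or.inr (Set.eq_empty_iff_forall_notMem.2 h))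
    rw [this]
    exact MeasurableSet.iInter fun u => (measurableSet_mem_mset n L u).compl
  · have : {y : ℤ → ℝ | sInf (mset y n L) = v} =
        {y | v ∈ mset y n L} ∩ ⋂ (u : ℕ) (_ : u < v), {y | u ∈ mset y n L}ᶜ := by
      ext y
      simp only [Set.mem_setOf_eq, Set.mem_inter_iff, Set.mem_iInter, Set.mem_compl_iff]
      constructor
      · intro h
        have hne : (mset y n L).Nonempty := by
          by_contra hc
          rw [Set.not_nonempty_iff_eq_empty] at hc
          rw [hc, Nat.sInf_empty] at h
          omega
        refine ⟨h ▸ Nat.sInf_mem hne, fun u hu => Nat.notMem_of_lt_sInf (h ▸ hu)⟩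
      · rintro ⟨hm, hlt⟩
        have h1 : sInf (mset y n L) ≤ v := Nat.sInf_le hm
        have h2 : ¬ sInf (mset y n L) < v := by
          intro hc
          exact hlt _ hc (Nat.sInf_mem ⟨v, hm⟩)
        omega
    rw [this]
    exact (measurableSet_mem_mset n L v).inter
      (MeasurableSet.iInter fun u => MeasurableSet.iInter fun _ =>
        (measurableSet_mem_mset n L u).compl)

lemma measurable_plam : ∀ n, Measurable fun y : ℤ → ℝ => plam y n := by
  intro n
  induction n with
  | zero => exact measurable_const
  | succ n ih =>
    have h2 : Measurable fun y : ℤ → ℝ => sInf (mset y n (plam y n)) := by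
      apply measurable_to_countable'
      intro v
      have : (fun y : ℤ → ℝ => sInf (mset y n (plam y n))) ⁻¹' {v} =
          ⋃ L : ℕ, ({y : ℤ → ℝ | plam y n = L} ∩ {y : ℤ → ℝ | sInf (mset y n L) = v}) := by
        ext y
        simp only [Set.mem_preimage, Set.mem_singleton_iff, Set.mem_iUnion, Set.mem_inter_iff,
          Set.mem_setOf_eq]
        constructor
        · intro h; exact ⟨plam y n, rfl, h⟩
        · rintro ⟨L, h1, h2⟩; rw [h1]; exact h2
      rw [this]
      exact MeasurableSet.iUnion fun L =>
        (ih (measurableSet_singleton L)).inter (measurableSet_sInf_mset n L v)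
    exact ih.add h2

lemma measurableSet_plam_eq (n r : ℕ) : MeasurableSet {y : ℤ → ℝ | plam y n = r} :=
  measurable_plam n (measurableSet_singleton r)

lemma measurableSet_mem_mset' (m u : ℕ) :
    MeasurableSet {y : ℤ → ℝ | u ∈ mset y m (plam y m)} := by
  have : {y : ℤ → ℝ | u ∈ mset y m (plam y m)} =
      ⋃ L : ℕ, ({y : ℤ → ℝ | plam y m = L} ∩ {y : ℤ → ℝ | u ∈ mset y m L}) := by
    ext y
    simp only [Set.mem_setOf_eq, Set.mem_iUnion, Set.mem_inter_iff]
    constructor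
    · intro h; exact ⟨plam y m, rfl, h⟩
    · rintro ⟨L, h1, h2⟩; rw [h1]; exact h2
  rw [this]
  exact MeasurableSet.iUnion fun L =>
    (measurableSet_plam_eq m L).inter (measurableSet_mem_mset m L u)

lemma measurableSet_goodRun (k : ℕ) : MeasurableSet {y : ℤ → ℝ | goodRun y k} := by
  have : {y : ℤ → ℝ | goodRun y k} =
      ⋂ (m : ℕ) (_ : m < k), ⋃ u : ℕ, {y : ℤ → ℝ | u ∈ mset y m (plam y m)} := by
    ext y
    simp only [Set.mem_setOf_eq, Set.mem_iInter, Set.mem_iUnion, goodRun, Set.Nonempty]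
  rw [this]
  exact MeasurableSet.iInter fun m => MeasurableSet.iInter fun _ =>
    MeasurableSet.iUnion fun u => measurableSet_mem_mset' m u

lemma measurable_shf (r : ℕ) : Measurable (shf r) :=
  measurable_pi_lambda _ fun s => measurable_pi_apply (s - (r : ℤ))

/-! ### The key measure estimate -/

open Set in
lemma key_bound {Ω : Type*} [MeasurableSpace Ω] (μ : Measure Ω)
    (X : ℤ → Ω → ℝ) (hmeas : ∀ i, Measurable (X i)) (hstat : IsStationaryProc μ X)
    (k i : ℕ) (S : Set ℝ) (hS : MeasurableSet S) :
    μ {ω | goodRun (fun s => X s ω) k ∧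
        X ((plam (fun s => X s ω) k : ℤ) - (i : ℤ)) ω ∈ S}
      ≤ μ {ω | X (-(i : ℤ)) ω ∈ S} := by
  have hPmeas : Measurable fun ω : Ω => fun s : ℤ => X s ω :=
    measurable_pi_lambda _ fun s => hmeas s
  set U : ℕ → Set (ℤ → ℝ) :=
    fun r => {y | goodRun y k ∧ plam y k = r ∧ y ((r : ℤ) - (i : ℤ)) ∈ S} with hU
  set V : ℕ → Set (ℤ → ℝ) :=
    fun r => {y | goodRun (shf r y) k ∧ plam (shf r y) k = r} with hV
  set W : Set (ℤ → ℝ) := {y | y (-(i : ℤ)) ∈ S} with hW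
  have hWmeas : MeasurableSet W := measurable_pi_apply _ hS
  have hVmeas : ∀ r, MeasurableSet (V r) := by
    intro r
    have : V r = shf r ⁻¹' {y | goodRun y k} ∩ shf r ⁻¹' {y | plam y k = r} := rfl
    rw [this]
    exact (measurable_shf r (measurableSet_goodRun k)).inter
      (measurable_shf r (measurableSet_plam_eq k r))
  have h1 : {ω | goodRun (fun s => X s ω) k ∧
      X ((plam (fun s => X s ω) k : ℤ) - (i : ℤ)) ω ∈ S}
      ⊆ (fun ω : Ω => fun s : ℤ => X s ω) ⁻¹' (⋃ r, U r) := by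
    rintro ω ⟨hg, hs⟩
    exact Set.mem_iUnion.2 ⟨plam (fun s => X s ω) k, hg, rfl, hs⟩
  have h2 : ∀ r : ℕ, μ ((fun ω : Ω => fun s : ℤ => X s ω) ⁻¹' U r)
      = μ ((fun ω : Ω => fun s : ℤ => X s ω) ⁻¹' (V r ∩ W)) := by
    intro r
    have hQmeas : Measurable fun ω : Ω => fun s : ℤ => X (s + (r : ℤ)) ω :=
      measurable_pi_lambda _ fun s => hmeas _
    have hshift : ∀ ω : Ω, shf r (fun s : ℤ => X (s + (r : ℤ)) ω) = fun s : ℤ => X s ω := by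
      intro ω
      funext s
      show X (s - (r : ℤ) + (r : ℤ)) ω = X s ω
      rw [sub_add_cancel]
    have hpre : (fun ω : Ω => fun s : ℤ => X s ω) ⁻¹' U r
        = (fun ω : Ω => fun s : ℤ => X (s + (r : ℤ)) ω) ⁻¹' (V r ∩ W) := by
      ext ω
      simp only [Set.mem_preimage, hU, hV, hW, Set.mem_inter_iff, Set.mem_setOf_eq]
      rw [hshift ω]
      have harg : (-(i : ℤ) + (r : ℤ)) = (r : ℤ) - (i : ℤ) := by ring
      constructor
      · rintro ⟨hg, hp, hs⟩
        refine ⟨⟨hg, hp⟩, ?_⟩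
        show X (-(i : ℤ) + (r : ℤ)) ω ∈ S
        rw [harg]; exact hs
      · rintro ⟨⟨hg, hp⟩, hs⟩
        refine ⟨hg, hp, ?_⟩
        have : X (-(i : ℤ) + (r : ℤ)) ω ∈ S := hs
        rwa [harg] at this
    have hUV : MeasurableSet (V r ∩ W) := (hVmeas r).inter hWmeas
    calc μ ((fun ω : Ω => fun s : ℤ => X s ω) ⁻¹' U r)
        = μ ((fun ω : Ω => fun s : ℤ => X (s + (r : ℤ)) ω) ⁻¹' (V r ∩ W)) := by rw [hpre]
      _ = μ.map (fun ω : Ω => fun s : ℤ => X (s + (r : ℤ)) ω) (V r ∩ W) :=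
          (Measure.map_apply hQmeas hUV).symm
      _ = μ.map (fun ω : Ω => fun s : ℤ => X s ω) (V r ∩ W) := by rw [hstat (r : ℤ)]
      _ = μ ((fun ω : Ω => fun s : ℤ => X s ω) ⁻¹' (V r ∩ W)) :=
          Measure.map_apply hPmeas hUV
  have h3 : Pairwise (Function.onFun Disjoint
      fun r => (fun ω : Ω => fun s : ℤ => X s ω) ⁻¹' (V r ∩ W)) := by
    intro r r' hne
    rw [Function.onFun, Set.disjoint_left]
    rintro ω ⟨⟨hg1, hp1⟩, _⟩ ⟨⟨hg2, hp2⟩, _⟩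
    exact hne (unique_anchor (fun s => X s ω) k r r' hp1 hg1 hp2 hg2)
  calc μ {ω | goodRun (fun s => X s ω) k ∧
        X ((plam (fun s => X s ω) k : ℤ) - (i : ℤ)) ω ∈ S}
      ≤ μ ((fun ω : Ω => fun s : ℤ => X s ω) ⁻¹' ⋃ r, U r) := measure_mono h1
    _ ≤ ∑' r : ℕ, μ ((fun ω : Ω => fun s : ℤ => X s ω) ⁻¹' U r) := by
        rw [Set.preimage_iUnion]
        exact measure_iUnion_le _
    _ = ∑' r : ℕ, μ ((fun ω : Ω => fun s : ℤ => X s ω) ⁻¹' (V r ∩ W)) :=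
        tsum_congr fun r => h2 r
    _ = μ (⋃ r : ℕ, (fun ω : Ω => fun s : ℤ => X s ω) ⁻¹' (V r ∩ W)) :=
        (measure_iUnion h3 fun r => hPmeas ((hVmeas r).inter hWmeas)).symm
    _ ≤ μ ((fun ω : Ω => fun s : ℤ => X s ω) ⁻¹' W) :=
        measure_mono (Set.iUnion_subset fun r =>
          Set.preimage_mono Set.inter_subset_right)
    _ = μ {ω | X (-(i : ℤ)) ω ∈ S} := rfl

/-! ### The shrinking neighborhoods of the dyadic grid -/

/-- Points lying within `2^{-(k+1)}` strictly below a grid point of level `j+1`. -/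
def Sset (j k : ℕ) : Set ℝ :=
  ⋃ m : ℤ, Set.Ico ((m : ℝ) / 2 ^ (j + 1) - 1 / 2 ^ (k + 1)) ((m : ℝ) / 2 ^ (j + 1))

lemma measurableSet_Sset (j k : ℕ) : MeasurableSet (Sset j k) :=
  MeasurableSet.iUnion fun m => measurableSet_Ico

lemma Sset_antitone (j : ℕ) : Antitone fun k => Sset j k := by
  intro a b hab
  refine Set.iUnion_mono fun m => Set.Ico_subset_Ico ?_ le_rfl
  have : (1 : ℝ) / 2 ^ (b + 1) ≤ 1 / 2 ^ (a + 1) := by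
    apply one_div_le_one_div_of_le (two_pow_pos' _)
    apply pow_le_pow_right₀ (by norm_num)
    omega
  linarith

lemma Sset_iInter_empty (j : ℕ) : ⋂ k : ℕ, Sset j k = ∅ := by
  ext x
  simp only [Set.mem_iInter, Set.mem_empty_iff_false, iff_false]
  intro h
  have ha : (0:ℝ) < 2 ^ (j + 1) := two_pow_pos' _
  have hδ : 0 < ((qcell (j + 1) x : ℝ) + 1) / 2 ^ (j + 1) - x :=
    sub_pos.2 (lt_qcell (j + 1) x)
  obtain ⟨k, hk⟩ : ∃ k : ℕ, (1 : ℝ) / 2 ^ (k + 1) <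
      ((qcell (j + 1) x : ℝ) + 1) / 2 ^ (j + 1) - x := by
    obtain ⟨n, hn⟩ := exists_pow_lt_of_lt_one hδ (by norm_num : (1:ℝ) / 2 < 1)
    refine ⟨n, lt_of_le_of_lt ?_ hn⟩
    rw [div_pow, one_pow]
    apply one_div_le_one_div_of_le (by positivity)
    apply pow_le_pow_right₀ (by norm_num)
    omega
  obtain ⟨m, hm⟩ := Set.mem_iUnion.1 (h k)
  obtain ⟨hm1, hm2⟩ := hm
  have hcm : qcell (j + 1) x + 1 ≤ m := by
    have hxa : x * 2 ^ (j + 1) < (m : ℝ) := by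
      rw [← lt_div_iff₀ ha]; exact hm2
    have : qcell (j + 1) x < m := Int.floor_lt.2 (by exact_mod_cast hxa)
    omega
  have h5 : ((qcell (j + 1) x : ℝ) + 1) / 2 ^ (j + 1) ≤ (m : ℝ) / 2 ^ (j + 1) := by
    have hc : ((qcell (j + 1) x : ℝ) + 1) ≤ (m : ℝ) := by exact_mod_cast hcm
    gcongr
  linarith

/-! ### Pointwise analysis on good trajectories -/

lemma pointwise {Ω : Type*} (X : ℤ → Ω → ℝ) (ω : Ω) (i : ℕ)
    (hg : ∀ n, (mset (fun s => X s ω) n (plam (fun s => X s ω) n)).Nonempty) :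
    ∃ L : ℝ,
      Tendsto (fun m : ℕ => X ((lam X m ω : ℤ) - (i : ℤ)) ω) atTop (𝓝 L) ∧
      tildeX X i ω = L ∧
      ∀ k, i ≤ k → ∀ m, k ≤ m →
        qcell (k + 1) (X ((lam X m ω : ℤ) - (i : ℤ)) ω)
          = qcell (k + 1) (X ((lam X k ω : ℤ) - (i : ℤ)) ω) := by
  set y : ℤ → ℝ := fun s => X s ω with hy
  have hl : ∀ n, lam X n ω = plam y n := lam_eq_plam X ω
  set Y : ℕ → ℝ := fun m => X ((lam X m ω : ℤ) - (i : ℤ)) ω with hY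
  have hgood : ∀ k, goodRun y k := fun k m _ => hg m
  have hkle : ∀ k : ℕ, k ≤ plam y k := fun k => le_plam (hgood k)
  have hstep : ∀ k, i ≤ k → qcell (k + 1) (Y (k + 1)) = qcell (k + 1) (Y k) := by
    intro k hik
    have ht := Nat.sInf_mem (hg k)
    have hik' : i ≤ plam y k := le_trans hik (hkle k)
    have h := ht.2 (plam y k - i) (Nat.sub_le _ _)
    have hplam : plam y (k + 1) = plam y k + sInf (mset y k (plam y k)) := rfl
    have e1 : ((sInf (mset y k (plam y k)) : ℕ) : ℤ) + ((plam y k - i : ℕ) : ℤ)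
        = (plam y (k + 1) : ℤ) - (i : ℤ) := by omega
    have e2 : ((plam y k - i : ℕ) : ℤ) = (plam y k : ℤ) - (i : ℤ) := by omega
    rw [e1, e2] at h
    show qcell (k + 1) (X ((lam X (k + 1) ω : ℤ) - (i : ℤ)) ω)
        = qcell (k + 1) (X ((lam X k ω : ℤ) - (i : ℤ)) ω)
    rw [hl (k + 1), hl k]
    exact h
  have hmatch : ∀ k, i ≤ k → ∀ m, k ≤ m → qcell (k + 1) (Y m) = qcell (k + 1) (Y k) := by
    intro k hik m hkm
    induction m, hkm using Nat.le_induction with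
    | base => rfl
    | succ m hkm ih =>
      have h2 : qcell (m + 1) (Y (m + 1)) = qcell (m + 1) (Y m) :=
        hstep m (le_trans hik hkm)
      have h3 : qcell (k + 1) (Y (m + 1)) = qcell (k + 1) (Y m) :=
        qcell_coarsen (by omega) h2
      rw [h3, ih]
  have hcauchy : CauchySeq Y := by
    rw [Metric.cauchySeq_iff']
    intro ε hε
    obtain ⟨N₀, hN₀⟩ : ∃ N₀ : ℕ, (1 : ℝ) / 2 ^ (N₀ + 1) < ε := by
      obtain ⟨n, hn⟩ := exists_pow_lt_of_lt_one hε (by norm_num : (1:ℝ) / 2 < 1)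
      refine ⟨n, lt_of_le_of_lt ?_ hn⟩
      rw [div_pow, one_pow]
      apply one_div_le_one_div_of_le (by positivity)
      apply pow_le_pow_right₀ (by norm_num)
      omega
    refine ⟨max N₀ i, fun n hn => ?_⟩
    have h := hmatch (max N₀ i) (le_max_right _ _) n hn
    calc dist (Y n) (Y (max N₀ i)) = |Y n - Y (max N₀ i)| := Real.dist_eq _ _
      _ < 1 / 2 ^ (max N₀ i + 1) := abs_sub_lt_of_qcell_eq h
      _ ≤ 1 / 2 ^ (N₀ + 1) := by
          apply one_div_le_one_div_of_le (by positivity)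
          apply pow_le_pow_right₀ (by norm_num)
          omega
      _ < ε := hN₀
  obtain ⟨L, hL⟩ := cauchySeq_tendsto_of_complete hcauchy
  exact ⟨L, hL, hL.limUnder_eq, hmatch⟩

end Stmt8Aux
end

noncomputable section

/-- For every `i ≥ 0`, almost surely
`[tilde X_{-i}]^{j+1} = [X_{λ_j − i}]^{j+1}` for all `j ≥ i`: the limiting value
`tilde X_{-i}` lies in the same cell of the dyadic partition `P_{j+1}` as `X_{λ_j − i}`
for every `j ≥ i`. -/
theorem stmt8 {Ω : Type*} [MeasurableSpace Ω] (μ : Measure Ω) [IsProbabilityMeasure μ]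
    (X : ℤ → Ω → ℝ) (hmeas : ∀ i, Measurable (X i))
    (hstat : IsStationaryProc μ X)
    (hfin : LamFinite μ X) :
    ∀ i : ℕ, ∀ᵐ ω ∂μ, ∀ j : ℕ, i ≤ j →
      qcell (j + 1) (tildeX X i ω) = qcell (j + 1) (X ((lam X j ω : ℤ) - (i : ℤ)) ω) := by
  intro i
  have hmain : ∀ j : ℕ,
      μ {ω | i ≤ j ∧ (∀ n, (Stmt8Aux.mset (fun s => X s ω) n
            (Stmt8Aux.plam (fun s => X s ω) n)).Nonempty) ∧
          qcell (j + 1) (tildeX X i ω) ≠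
            qcell (j + 1) (X ((lam X j ω : ℤ) - (i : ℤ)) ω)} = 0 := by
    intro j
    by_cases hij : i ≤ j
    · set Bad := {ω | i ≤ j ∧ (∀ n, (Stmt8Aux.mset (fun s => X s ω) n
            (Stmt8Aux.plam (fun s => X s ω) n)).Nonempty) ∧
          qcell (j + 1) (tildeX X i ω) ≠
            qcell (j + 1) (X ((lam X j ω : ℤ) - (i : ℤ)) ω)} with hBad
      have hsub : ∀ k, j ≤ k → Bad ⊆ {ω | Stmt8Aux.goodRun (fun s => X s ω) k ∧
          X ((Stmt8Aux.plam (fun s => X s ω) k : ℤ) - (i : ℤ)) ω ∈ Stmt8Aux.Sset j k} := by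
        intro k hjk ω hω
        obtain ⟨-, hg, hne⟩ := hω
        refine ⟨fun m _ => hg m, ?_⟩
        obtain ⟨L, hTend, htX, hmatch⟩ := Stmt8Aux.pointwise X ω i hg
        rw [← Stmt8Aux.lam_eq_plam X ω k]
        set Y : ℕ → ℝ := fun m => X ((lam X m ω : ℤ) - (i : ℤ)) ω with hY
        have hup : ∀ l, i ≤ l → L ≤ ((qcell (l + 1) (Y l) : ℝ) + 1) / 2 ^ (l + 1) := by
          intro l hil
          refine le_of_tendsto hTend (eventually_atTop.2 ⟨l, fun m hm => ?_⟩)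
          have h := Stmt8Aux.lt_qcell (l + 1) (Y m)
          rw [hmatch l hil m hm] at h
          exact h.le
        have hlow : (qcell (j + 1) (Y j) : ℝ) / 2 ^ (j + 1) ≤ L := by
          refine ge_of_tendsto hTend (eventually_atTop.2 ⟨j, fun m hm => ?_⟩)
          have h := Stmt8Aux.qcell_le (j + 1) (Y m)
          rw [hmatch j hij m hm] at h
          exact h
        have hLval : L = ((qcell (j + 1) (Y j) : ℝ) + 1) / 2 ^ (j + 1) := by
          rcases eq_or_lt_of_le (hup j hij) with h | h
          · exact h
          · exact absurd (htX ▸ Stmt8Aux.qcell_eq_iff.2 ⟨hlow, h⟩) hne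
        have hik : i ≤ k := le_trans hij hjk
        have hupper : Y k < L := by
          have h2 := Stmt8Aux.lt_qcell (j + 1) (Y k)
          rw [hmatch j hij k hjk] at h2
          rw [hLval]
          exact h2
        have hlower : L - 1 / 2 ^ (k + 1) ≤ Y k := by
          have h3 := hup k hik
          have h4 := Stmt8Aux.qcell_le (k + 1) (Y k)
          have h5 : ((qcell (k + 1) (Y k) : ℝ) + 1) / 2 ^ (k + 1)
              - (qcell (k + 1) (Y k) : ℝ) / 2 ^ (k + 1) = 1 / 2 ^ (k + 1) := by ring
          linarith
        refine Set.mem_iUnion.2 ⟨qcell (j + 1) (Y j) + 1, ?_⟩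
        have hcast : ((qcell (j + 1) (Y j) + 1 : ℤ) : ℝ)
            = (qcell (j + 1) (Y j) : ℝ) + 1 := by push_cast; ring
        constructor
        · rw [hcast, ← hLval]; exact hlower
        · rw [hcast, ← hLval]; exact hupper
      have hle : ∀ k, j ≤ k → μ Bad ≤ μ {ω | X (-(i : ℤ)) ω ∈ Stmt8Aux.Sset j k} :=
        fun k hk => le_trans (measure_mono (hsub k hk))
          (Stmt8Aux.key_bound μ X hmeas hstat k i (Stmt8Aux.Sset j k)
            (Stmt8Aux.measurableSet_Sset j k))
      have htend : Tendsto (fun k : ℕ => μ {ω | X (-(i : ℤ)) ω ∈ Stmt8Aux.Sset j k})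
          atTop (𝓝 0) := by
        have h0 : (⋂ k : ℕ, {ω | X (-(i : ℤ)) ω ∈ Stmt8Aux.Sset j k}) = (∅ : Set Ω) := by
          ext ω
          simp only [Set.mem_iInter, Set.mem_setOf_eq, Set.mem_empty_iff_false, iff_false]
          intro hc
          have h := Set.mem_iInter.2 hc
          rw [Stmt8Aux.Sset_iInter_empty j] at h
          exact h
        have h := tendsto_measure_iInter_atTop (μ := μ)
          (s := fun k : ℕ => {ω | X (-(i : ℤ)) ω ∈ Stmt8Aux.Sset j k})
          (fun k => ((hmeas _) (Stmt8Aux.measurableSet_Sset j k)).nullMeasurableSet)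
          (fun a b hab ω hω => Stmt8Aux.Sset_antitone j hab hω)
          ⟨0, measure_ne_top μ _⟩
        rw [h0] at h
        simpa [Function.comp_def] using h
      have hfinal : μ Bad ≤ 0 :=
        ge_of_tendsto htend (eventually_atTop.2 ⟨j, fun k hk => hle k hk⟩)
      exact le_antisymm hfinal zero_le
    · have hempty : {ω | i ≤ j ∧ (∀ n, (Stmt8Aux.mset (fun s => X s ω) n
            (Stmt8Aux.plam (fun s => X s ω) n)).Nonempty) ∧
          qcell (j + 1) (tildeX X i ω) ≠
            qcell (j + 1) (X ((lam X j ω : ℤ) - (i : ℤ)) ω)} = (∅ : Set Ω) := by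
        ext ω; simp [hij]
      rw [hempty]
      exact measure_empty
  have h2 : ∀ᵐ ω ∂μ, ∀ j : ℕ, ¬(i ≤ j ∧ (∀ n, (Stmt8Aux.mset (fun s => X s ω) n
        (Stmt8Aux.plam (fun s => X s ω) n)).Nonempty) ∧
      qcell (j + 1) (tildeX X i ω) ≠
        qcell (j + 1) (X ((lam X j ω : ℤ) - (i : ℤ)) ω)) :=
    ae_all_iff.2 fun j => measure_eq_zero_iff_ae_notMem.1 (hmain j)
  filter_upwards [hfin, h2] with ω hgfin hnb j hij
  by_contra hne
  have hg' : ∀ n, (Stmt8Aux.mset (fun s => X s ω) n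
      (Stmt8Aux.plam (fun s => X s ω) n)).Nonempty := by
    intro n
    have heq : Stmt8Aux.mset (fun s => X s ω) n (Stmt8Aux.plam (fun s => X s ω) n) =
        {t : ℕ | 0 < t ∧ ∀ i : ℕ, i ≤ lam X n ω →
          qcell (n + 1) (X ((t : ℤ) + (i : ℤ)) ω) = qcell (n + 1) (X (i : ℤ) ω)} := by
      rw [← Stmt8Aux.lam_eq_plam X ω n]
      rfl
    rw [heq]
    exact hgfin n
  exact hnb j ⟨hij, hg', hne⟩


end
end

section
/- The one-sided process {tilde X_n}_{n≤0} of limiting values along the stopping times has the same distribution as the one-sided original process {X_n}_{n≤0}. -/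
open MeasureTheory Filter Topology

noncomputable section

variable {Ω : Type*}

/-- Stationarity of a two-sided real valued process. -/
def IsStationaryReal [MeasurableSpace Ω] (μ : Measure Ω) (X : ℤ → Ω → ℝ) : Prop :=
  ∀ k : ℤ, μ.map (fun ω => fun i : ℤ => X (i + k) ω) = μ.map (fun ω => fun i : ℤ => X i ω)

end

noncomputable section

namespace Stmt9

def E : ℤ → (ℤ → ℝ) → ℝ := fun i x => x i

def shift (u : ℤ) (x : ℤ → ℝ) : ℤ → ℝ := fun i => x (i + u)

def mset (j : ℕ) (x : ℤ → ℝ) : Set ℕ :=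
  {t : ℕ | 0 < t ∧ ∀ i : ℕ, i ≤ lam E j x →
    qcell (j + 1) (E ((t : ℤ) + (i : ℤ)) x) = qcell (j + 1) (E (i : ℤ) x)}

def Good (x : ℤ → ℝ) : Prop := ∀ j, (mset j x).Nonempty

lemma lam_zero (x : ℤ → ℝ) : lam E 0 x = 0 := rfl

lemma lam_succ (j : ℕ) (x : ℤ → ℝ) :
    lam E (j + 1) x = lam E j x + sInf (mset j x) := rfl

lemma mem_mset_iff {j t : ℕ} {x : ℤ → ℝ} :
    t ∈ mset j x ↔ 0 < t ∧ ∀ i : ℕ, i ≤ lam E j x →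
      qcell (j + 1) (x ((t : ℤ) + (i : ℤ))) = qcell (j + 1) (x (i : ℤ)) := Iff.rfl

lemma shift_apply (u : ℤ) (x : ℤ → ℝ) (i : ℤ) : shift u x i = x (i + u) := rfl

lemma shift_shift (u v : ℤ) (x : ℤ → ℝ) : shift u (shift v x) = shift (u + v) x := by
  funext i; simp [shift, add_assoc]

lemma shift_zero (x : ℤ → ℝ) : shift 0 x = x := by funext i; simp [shift]

lemma floor_half (a : ℝ) : ⌊a⌋ = ⌊2 * a⌋ / 2 := by
  set m := ⌊2 * a⌋ with hm
  have h1 : (m : ℝ) ≤ 2 * a := Int.floor_le _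
  have h2 : 2 * a < m + 1 := Int.lt_floor_add_one _
  have e1 : (m / 2) * 2 ≤ m := by omega
  have e2 : m + 1 ≤ (m / 2) * 2 + 2 := by omega
  rw [Int.floor_eq_iff]
  constructor
  · have : ((m / 2 : ℤ) : ℝ) * 2 ≤ (m : ℝ) := by exact_mod_cast e1
    linarith
  · have : (m : ℝ) + 1 ≤ ((m / 2 : ℤ) : ℝ) * 2 + 2 := by exact_mod_cast e2
    push_cast
    linarith

lemma qcell_succ_div (k : ℕ) (x : ℝ) : qcell k x = qcell (k + 1) x / 2 := by
  unfold qcell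
  rw [pow_succ, show x * (2 ^ k * 2) = 2 * (x * 2 ^ k) by ring]
  exact floor_half _

lemma qcell_eq_of_le : ∀ {k m : ℕ}, m ≤ k → ∀ {x y : ℝ}, qcell k x = qcell k y →
    qcell m x = qcell m y := by
  intro k
  induction k with
  | zero =>
    intro m hm x y h
    obtain rfl : m = 0 := Nat.le_zero.mp hm
    exact h
  | succ k ih =>
    intro m hm x y h
    rcases Nat.eq_or_lt_of_le hm with rfl | hlt
    · exact h
    · exact ih (by omega) (by rw [qcell_succ_div, h, ← qcell_succ_div])

lemma abs_sub_lt_of_qcell_eq {k : ℕ} {x y : ℝ} (h : qcell k x = qcell k y) :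
    |x - y| < (2 ^ k)⁻¹ := by
  have hx1 : ((qcell k x : ℝ)) ≤ x * 2 ^ k := Int.floor_le _
  have hx2 : x * 2 ^ k < qcell k x + 1 := Int.lt_floor_add_one _
  have hy1 : ((qcell k y : ℝ)) ≤ y * 2 ^ k := Int.floor_le _
  have hy2 : y * 2 ^ k < qcell k y + 1 := Int.lt_floor_add_one _
  rw [h] at hx1 hx2
  have hpow : (0:ℝ) < 2 ^ k := by positivity
  rw [abs_sub_lt_iff]
  constructor <;> rw [← mul_lt_mul_iff_left₀ hpow] <;>
    · rw [sub_mul, inv_mul_cancel₀ (ne_of_gt hpow)]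
      linarith

lemma Good.sInf_mem {x : ℤ → ℝ} (h : Good x) (j : ℕ) : sInf (mset j x) ∈ mset j x :=
  Nat.sInf_mem (h j)

lemma Good.sInf_pos {x : ℤ → ℝ} (h : Good x) (j : ℕ) : 0 < sInf (mset j x) :=
  (h.sInf_mem j).1

lemma lam_le_succ (j : ℕ) (x : ℤ → ℝ) : lam E j x ≤ lam E (j + 1) x :=
  Nat.le_add_right _ _

lemma Good.le_lam {x : ℤ → ℝ} (h : Good x) (j : ℕ) : j ≤ lam E j x := by
  induction j with
  | zero => simp [lam_zero]
  | succ j ih =>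
    have := h.sInf_pos j
    rw [lam_succ]; omega

/-- The value of `lam` at level `j` only depends on the level-`j` quantization of the
window `[0, lam E j w]`. -/
lemma lam_congr : ∀ (j : ℕ) (w w' : ℤ → ℝ), Good w →
    (∀ i : ℕ, i ≤ lam E j w → qcell j (w' (i : ℤ)) = qcell j (w (i : ℤ))) →
    lam E j w' = lam E j w := by
  intro j
  induction j with
  | zero => intro w w' _ _; rfl
  | succ j ih =>
    intro w w' hw h
    have hwin : ∀ i : ℕ, i ≤ lam E (j + 1) w →
        qcell (j + 1) (w' (i : ℤ)) = qcell (j + 1) (w (i : ℤ)) := h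
    have hlow : lam E j w' = lam E j w := by
      refine ih w w' hw fun i hi => ?_
      exact qcell_eq_of_le (Nat.le_succ j)
        (hwin i (le_trans hi (lam_le_succ j w)))
    set r := sInf (mset j w) with hrdef
    have hrmem : r ∈ mset j w := hw.sInf_mem j
    have hle : ∀ i : ℕ, i ≤ lam E j w → r + i ≤ lam E (j + 1) w := by
      intro i hi; rw [lam_succ]; omega
    -- r belongs to mset j w'
    have hrmem' : r ∈ mset j w' := by
      refine ⟨hrmem.1, fun i hi => ?_⟩
      rw [hlow] at hi
      have e1 : ((r : ℤ) + (i : ℤ)) = ((r + i : ℕ) : ℤ) := by push_cast; ring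
      have q1 : qcell (j + 1) (w' ((r : ℤ) + (i : ℤ))) = qcell (j + 1) (w ((r : ℤ) + (i : ℤ))) := by
        rw [e1]; exact hwin (r + i) (hle i hi)
      have q2 : qcell (j + 1) (w' (i : ℤ)) = qcell (j + 1) (w (i : ℤ)) :=
        hwin i (le_trans hi (lam_le_succ j w))
      show qcell (j + 1) (w' ((r : ℤ) + (i : ℤ))) = qcell (j + 1) (w' (i : ℤ))
      rw [q1, q2]
      exact hrmem.2 i hi
    -- nothing smaller belongs
    have hmin : ∀ t : ℕ, t < r → t ∉ mset j w' := by
      intro t ht hmem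
      have : t ∈ mset j w := by
        refine ⟨hmem.1, fun i hi => ?_⟩
        have hi' : i ≤ lam E j w' := by rw [hlow]; exact hi
        have e1 : ((t : ℤ) + (i : ℤ)) = ((t + i : ℕ) : ℤ) := by push_cast; ring
        have q1 : qcell (j + 1) (w' ((t : ℤ) + (i : ℤ))) = qcell (j + 1) (w ((t : ℤ) + (i : ℤ))) := by
          rw [e1]; exact hwin (t + i) (by rw [lam_succ]; omega)
        have q2 : qcell (j + 1) (w' (i : ℤ)) = qcell (j + 1) (w (i : ℤ)) :=
          hwin i (le_trans hi (lam_le_succ j w))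
        show qcell (j + 1) (w ((t : ℤ) + (i : ℤ))) = qcell (j + 1) (w (i : ℤ))
        rw [← q1, ← q2]
        exact hmem.2 i hi'
      exact absurd this (Nat.notMem_of_lt_sInf ht)
    have : sInf (mset j w') = r := by
      refine le_antisymm (Nat.sInf_le hrmem') ?_
      by_contra hcon
      push_neg at hcon
      exact hmin _ hcon (Nat.sInf_mem ⟨r, hrmem'⟩)
    rw [lam_succ, lam_succ, hlow, this]


lemma qcell_arg_congr {k : ℕ} (x : ℤ → ℝ) {a b : ℤ} (h : a = b) :
    qcell k (x a) = qcell k (x b) := by rw [h]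

/-- **Key combinatorial lemma**: two `lam` constructions started at different times
never end at the same place (on good paths). -/
lemma key : ∀ (j : ℕ) (x : ℤ → ℝ), (∀ k : ℤ, Good (shift k x)) → ∀ u : ℕ, 0 < u →
    lam E j (shift (u : ℤ) x) + u ≠ lam E j x := by
  intro j
  induction j with
  | zero =>
    intro x _ u hu H
    rw [lam_zero, lam_zero] at H
    omega
  | succ j ih =>
    intro x hG u hu H
    have hx : Good x := by have := hG 0; rwa [shift_zero] at this
    set z := shift (u : ℤ) x with hz
    have hzG : Good z := hG (u : ℤ)
    set L := lam E j x with hL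
    set L' := lam E j z with hL'
    set r := sInf (mset j x) with hr
    set r' := sInf (mset j z) with hr'
    have hrmem := hx.sInf_mem j
    have hr'mem := hzG.sInf_mem j
    have hrpos : 0 < r := hx.sInf_pos j
    have hr'pos : 0 < r' := hzG.sInf_pos j
    have hH : L' + r' + u = L + r := by
      rw [lam_succ, lam_succ] at H
      omega
    have ha : ∀ i : ℕ, i ≤ L →
        qcell (j + 1) (x ((r : ℤ) + (i : ℤ))) = qcell (j + 1) (x (i : ℤ)) :=
      fun i hi => hrmem.2 i hi
    have hb : ∀ i : ℕ, i ≤ L' →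
        qcell (j + 1) (x ((r' : ℤ) + (i : ℤ) + (u : ℤ))) = qcell (j + 1) (x ((i : ℤ) + (u : ℤ))) :=
      fun i hi => hr'mem.2 i hi
    rcases lt_trichotomy L L' with hc | hc | hc
    · -- Case L < L' : earlier return for x, contradiction with minimality of r
      set v := u + L' - L with hv
      have hvpos : 0 < v := by omega
      have hvmem : v ∈ mset j x := by
        refine ⟨hvpos, fun i hi => ?_⟩
        show qcell (j + 1) (x ((v : ℤ) + (i : ℤ))) = qcell (j + 1) (x (i : ℤ))
        have h1 := hb (L' - L + i) (by omega)
        have e1 : (v : ℤ) + (i : ℤ) = ((L' - L + i : ℕ) : ℤ) + (u : ℤ) := by omega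
        have e2 : ((r' : ℤ) + ((L' - L + i : ℕ) : ℤ) + (u : ℤ)) = (r : ℤ) + (i : ℤ) := by omega
        rw [qcell_arg_congr x e1, ← h1, qcell_arg_congr x e2]
        exact ha i hi
      have := Nat.sInf_le hvmem
      omega
    · -- Case L = L' : x's own pattern returns at u < r
      have humem : u ∈ mset j x := by
        refine ⟨hu, fun i hi => ?_⟩
        show qcell (j + 1) (x ((u : ℤ) + (i : ℤ))) = qcell (j + 1) (x (i : ℤ))
        have h1 := hb i (by omega)
        have e1 : (u : ℤ) + (i : ℤ) = (i : ℤ) + (u : ℤ) := by omega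
        have e2 : ((r' : ℤ) + (i : ℤ) + (u : ℤ)) = (r : ℤ) + (i : ℤ) := by omega
        rw [qcell_arg_congr x e1, ← h1, qcell_arg_congr x e2]
        exact ha i hi
      have := Nat.sInf_le humem
      omega
    · -- Case L' < L : use the window lemma and the induction hypothesis
      set p := L - L' with hp
      have hppos : 0 < p := by omega
      have hq : ∀ i : ℕ, i ≤ L' →
          qcell (j + 1) (x ((i : ℤ) + (p : ℤ))) = qcell (j + 1) (x ((i : ℤ) + (u : ℤ))) := by
        intro i hi
        have h1 := hb i hi
        have h2 := ha (p + i) (by omega)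
        have e1 : ((r' : ℤ) + (i : ℤ) + (u : ℤ)) = (r : ℤ) + ((p + i : ℕ) : ℤ) := by omega
        have e2 : ((p + i : ℕ) : ℤ) = (i : ℤ) + (p : ℤ) := by omega
        rw [← h1, qcell_arg_congr x e1, h2, qcell_arg_congr x e2]
      have hlp : lam E j (shift (p : ℤ) x) = L' := by
        refine lam_congr j z (shift (p : ℤ) x) hzG fun i hi => ?_
        show qcell j (x ((i : ℤ) + (p : ℤ))) = qcell j (x ((i : ℤ) + (u : ℤ)))
        exact qcell_eq_of_le (Nat.le_succ j) (hq i hi)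
      exact ih x hG p hppos (by rw [hlp]; omega)


lemma Good.qcell_nest {x : ℤ → ℝ} (hx : Good x) {n j : ℕ} (hnj : n ≤ j) :
    ∀ j', j ≤ j' →
      qcell j (x ((lam E j' x : ℤ) - (n : ℤ))) = qcell j (x ((lam E j x : ℤ) - (n : ℤ))) := by
  intro j' hjj'
  induction j' , hjj' using Nat.le_induction with
  | base => rfl
  | succ j' hjj' ih =>
    have hnl : n ≤ lam E j' x := le_trans (le_trans hnj hjj') (hx.le_lam j')
    have hmem := hx.sInf_mem j'
    set r := sInf (mset j' x) with hr
    have hls : lam E (j' + 1) x = lam E j' x + r := lam_succ j' x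
    have h1 := hmem.2 (lam E j' x - n) (by omega)
    have e1 : ((r : ℤ) + ((lam E j' x - n : ℕ) : ℤ)) = (lam E (j' + 1) x : ℤ) - (n : ℤ) := by
      omega
    have e2 : ((lam E j' x - n : ℕ) : ℤ) = (lam E j' x : ℤ) - (n : ℤ) := by omega
    have h2 : qcell (j' + 1) (x ((lam E (j' + 1) x : ℤ) - (n : ℤ)))
        = qcell (j' + 1) (x ((lam E j' x : ℤ) - (n : ℤ))) := by
      rw [← qcell_arg_congr x e1, ← qcell_arg_congr x e2]
      exact h1
    rw [qcell_eq_of_le (by omega : j ≤ j' + 1) h2]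
    exact ih

lemma Good.tendsto_tildeX {x : ℤ → ℝ} (hx : Good x) (n : ℕ) :
    Tendsto (fun j : ℕ => x ((lam E j x : ℤ) - (n : ℤ))) atTop (𝓝 (tildeX E n x)) := by
  set f : ℕ → ℝ := fun j => x ((lam E j x : ℤ) - (n : ℤ)) with hf
  have hcauchy : CauchySeq f := by
    rw [Metric.cauchySeq_iff']
    intro ε hε
    obtain ⟨K, hK⟩ := exists_pow_lt_of_lt_one hε (by norm_num : (1 : ℝ) / 2 < 1)
    refine ⟨max n K, fun m hm => ?_⟩
    have h1 := hx.qcell_nest (le_max_left n K) m hm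
    have h2 := abs_sub_lt_of_qcell_eq h1
    have h3 : ((2 : ℝ) ^ (max n K))⁻¹ ≤ (1 / 2) ^ K := by
      rw [one_div, inv_pow]
      exact inv_anti₀ (by positivity)
        (pow_le_pow_right₀ (by norm_num) (le_max_right n K))
    rw [Real.dist_eq]
    calc |f m - f (max n K)| < ((2 : ℝ) ^ (max n K))⁻¹ := h2
      _ ≤ (1 / 2) ^ K := h3
      _ < ε := hK
  obtain ⟨l, hl⟩ := cauchySeq_tendsto_of_complete hcauchy
  have he : tildeX E n x = l := hl.limUnder_eq
  rwa [he]

lemma measurable_qcell (k : ℕ) : Measurable (qcell k) :=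
  Int.measurable_floor.comp (measurable_id.mul_const _)

lemma measurableSet_qcell_eq (k : ℕ) (a b : ℤ) :
    MeasurableSet {x : ℤ → ℝ | qcell k (x a) = qcell k (x b)} :=
  measurableSet_eq_fun ((measurable_qcell k).comp (measurable_pi_apply a))
    ((measurable_qcell k).comp (measurable_pi_apply b))

lemma nat_sInf_eq_iff {T : Set ℕ} {m : ℕ} :
    sInf T = m ↔ (m ∈ T ∧ ∀ k < m, k ∉ T) ∨ (m = 0 ∧ ∀ k, k ∉ T) := by
  constructor
  · intro h
    rcases T.eq_empty_or_nonempty with he | hne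
    · right
      subst he
      simp only [Nat.sInf_empty] at h
      exact ⟨h.symm, fun k => id⟩
    · left
      subst h
      exact ⟨Nat.sInf_mem hne, fun k hk => Nat.notMem_of_lt_sInf hk⟩
  · rintro (⟨hm, hmin⟩ | ⟨rfl, hall⟩)
    · refine le_antisymm (Nat.sInf_le hm) ?_
      by_contra hcon
      push_neg at hcon
      exact hmin _ hcon (Nat.sInf_mem ⟨m, hm⟩)
    · have : T = ∅ := Set.eq_empty_iff_forall_notMem.mpr hall
      rw [this, Nat.sInf_empty]

lemma measurableSet_mset (j : ℕ) (hlam : Measurable fun x : ℤ → ℝ => lam E j x) (t : ℕ) :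
    MeasurableSet {x : ℤ → ℝ | t ∈ mset j x} := by
  have heq : {x : ℤ → ℝ | t ∈ mset j x} =
      {x : ℤ → ℝ | 0 < t} ∩ ⋃ ℓ : ℕ, (((fun x : ℤ → ℝ => lam E j x) ⁻¹' {ℓ}) ∩
        ⋂ i ∈ Finset.range (ℓ + 1),
          {x : ℤ → ℝ | qcell (j + 1) (x ((t : ℤ) + (i : ℤ))) = qcell (j + 1) (x (i : ℤ))}) := by
    ext x
    simp only [mem_mset_iff, Set.mem_setOf_eq, Set.mem_inter_iff, Set.mem_iUnion,
      Set.mem_preimage, Set.mem_singleton_iff, Set.mem_iInter, Finset.mem_range]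
    constructor
    · rintro ⟨hpos, hmatch⟩
      exact ⟨hpos, lam E j x, rfl, fun i hi => hmatch i (by omega)⟩
    · rintro ⟨hpos, ℓ, hℓ, hmatch⟩
      exact ⟨hpos, fun i hi => hmatch i (by omega)⟩
  rw [heq]
  exact (MeasurableSet.const _).inter <| MeasurableSet.iUnion fun ℓ =>
    (hlam (measurableSet_singleton ℓ)).inter <| MeasurableSet.biInter (Set.to_countable _)
      fun i _ => measurableSet_qcell_eq _ _ _

lemma measurable_lam : ∀ j : ℕ, Measurable fun x : ℤ → ℝ => lam E j x := by
  intro j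
  induction j with
  | zero =>
    have : (fun x : ℤ → ℝ => lam E 0 x) = fun _ => 0 := rfl
    rw [this]; exact measurable_const
  | succ j ih =>
    have hm := measurableSet_mset j ih
    have hsinf : Measurable fun x : ℤ → ℝ => sInf (mset j x) := by
      apply measurable_to_countable'
      intro m
      have heq : (fun x : ℤ → ℝ => sInf (mset j x)) ⁻¹' {m} =
          ({x : ℤ → ℝ | m ∈ mset j x} ∩ ⋂ k ∈ Finset.range m, {x : ℤ → ℝ | k ∈ mset j x}ᶜ) ∪
          ({x : ℤ → ℝ | m = 0} ∩ ⋂ k : ℕ, {x : ℤ → ℝ | k ∈ mset j x}ᶜ) := by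
        ext x
        simp only [Set.mem_preimage, Set.mem_singleton_iff, Set.mem_union, Set.mem_inter_iff,
          Set.mem_setOf_eq, Set.mem_iInter, Set.mem_compl_iff, Finset.mem_range]
        rw [nat_sInf_eq_iff]
      rw [heq]
      exact ((hm m).inter (MeasurableSet.biInter (Set.to_countable _)
          fun k _ => (hm k).compl)).union
        ((MeasurableSet.const _).inter (MeasurableSet.iInter fun k => (hm k).compl))
    have : (fun x : ℤ → ℝ => lam E (j + 1) x) =
        fun x => lam E j x + sInf (mset j x) := funext fun x => lam_succ j x
    rw [this]
    exact ih.add hsinf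

lemma measurableSet_good : MeasurableSet {x : ℤ → ℝ | Good x} := by
  have heq : {x : ℤ → ℝ | Good x} = ⋂ j : ℕ, ⋃ t : ℕ, {x : ℤ → ℝ | t ∈ mset j x} := by
    ext x
    simp only [Set.mem_setOf_eq, Set.mem_iInter, Set.mem_iUnion]
    rfl
  rw [heq]
  exact MeasurableSet.iInter fun j => MeasurableSet.iUnion fun t =>
    measurableSet_mset j (measurable_lam j) t

lemma measurable_shift (u : ℤ) : Measurable (shift u) :=
  measurable_pi_lambda _ fun i => measurable_pi_apply (i + u)

/-- The backward window at the stopping time. -/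
def Phi (j : ℕ) (x : ℤ → ℝ) : ℕ → ℝ := fun i => x ((lam E j x : ℤ) - (i : ℤ))

/-- The backward window at a fixed time `t`. -/
def Phit (t : ℕ) (x : ℤ → ℝ) : ℕ → ℝ := fun i => x ((t : ℤ) - (i : ℤ))

/-- The backward window at time `0`. -/
def Psi (x : ℤ → ℝ) : ℕ → ℝ := fun i => x (-(i : ℤ))

lemma measurable_Psi : Measurable Psi :=
  measurable_pi_lambda _ fun i => measurable_pi_apply _

lemma measurable_Phit (t : ℕ) : Measurable (Phit t) :=
  measurable_pi_lambda _ fun i => measurable_pi_apply _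

lemma measurable_Phi (j : ℕ) : Measurable (Phi j) := by
  apply measurable_pi_lambda
  intro i
  show Measurable fun x : ℤ → ℝ => x ((lam E j x : ℤ) - (i : ℤ))
  exact Measurable.comp (f := fun x : ℤ → ℝ => (x, lam E j x))
    (g := fun p : (ℤ → ℝ) × ℕ => p.1 ((p.2 : ℤ) - (i : ℤ)))
    (measurable_from_prod_countable_left
      (f := fun p : (ℤ → ℝ) × ℕ => p.1 ((p.2 : ℤ) - (i : ℤ)))
      fun b => measurable_pi_apply ((b : ℤ) - (i : ℤ)))
    (measurable_id.prodMk (measurable_lam j))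

/-- The "good everywhere" set. -/
def GoodAll : Set (ℤ → ℝ) := {x | ∀ k : ℤ, Good (shift k x)}

lemma measurableSet_goodAll : MeasurableSet GoodAll := by
  have heq : GoodAll = ⋂ k : ℤ, shift k ⁻¹' {x | Good x} := by
    ext x
    simp only [GoodAll, Set.mem_setOf_eq, Set.mem_iInter, Set.mem_preimage]
  rw [heq]
  exact MeasurableSet.iInter fun k => measurable_shift k measurableSet_good

/-- The candidate sets for the backward reconstruction; on the good set they are
pairwise disjoint by the key lemma. -/
def Bset (j t : ℕ) : Set (ℤ → ℝ) := {x | lam E j (shift (-(t : ℤ)) x) = t}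

lemma measurableSet_Bset (j t : ℕ) : MeasurableSet (Bset j t) :=
  measurable_shift (-(t : ℤ)) (measurable_lam j (measurableSet_singleton t))

lemma Bset_disjoint_on_good (j : ℕ) {s t : ℕ} (hst : s < t) :
    Disjoint (Bset j s ∩ GoodAll) (Bset j t ∩ GoodAll) := by
  rw [Set.disjoint_left]
  rintro x ⟨hs, hG⟩ ⟨ht, _⟩
  have hGbase : ∀ k : ℤ, Good (shift k (shift (-(t : ℤ)) x)) := by
    intro k
    rw [shift_shift]
    exact hG _
  have hkey := key j (shift (-(t : ℤ)) x) hGbase (t - s) (by omega)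
  have harg : ((t - s : ℕ) : ℤ) + -(t : ℤ) = -(s : ℤ) := by omega
  have he : shift (((t - s : ℕ) : ℤ)) (shift (-(t : ℤ)) x) = shift (-(s : ℤ)) x := by
    rw [shift_shift, harg]
  have hs' : lam E j (shift (-(s : ℤ)) x) = s := hs
  have ht' : lam E j (shift (-(t : ℤ)) x) = t := ht
  apply hkey
  rw [he, hs', ht']
  omega

lemma Bset_pairwise_disjoint (j : ℕ) :
    Pairwise (Function.onFun Disjoint fun t => Bset j t ∩ GoodAll) := by
  intro s t hst
  rcases lt_or_gt_of_ne hst with h | h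
  · exact Bset_disjoint_on_good j h
  · exact (Bset_disjoint_on_good j h).symm

lemma lamfib_pairwise_disjoint (j : ℕ) (A : Set (ℕ → ℝ)) :
    Pairwise (Function.onFun Disjoint fun t : ℕ =>
      ({x : ℤ → ℝ | lam E j x = t} ∩ Phit t ⁻¹' A)) := by
  intro s t hst
  rw [Function.onFun, Set.disjoint_left]
  rintro x ⟨h1, _⟩ ⟨h2, _⟩
  rw [Set.mem_setOf_eq] at h1 h2
  exact hst (by rw [← h1, ← h2])

/-- The law of the backward window read off at `λ_j` coincides with the law of the
backward window at time `0`. -/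
lemma law_Phi {ν : Measure (ℤ → ℝ)} [IsProbabilityMeasure ν]
    (hshift : ∀ k : ℤ, ν.map (shift k) = ν)
    (hgood : ∀ᵐ x ∂ν, x ∈ GoodAll) (j : ℕ) :
    ν.map (Phi j) = ν.map Psi := by
  have hGnull : ν GoodAllᶜ = 0 := by
    rw [ae_iff] at hgood
    simpa [Set.compl_def] using hgood
  -- shift invariance on sets
  have hmp : ∀ (t : ℕ) (S : Set (ℤ → ℝ)), MeasurableSet S →
      ν (shift (-(t : ℤ)) ⁻¹' S) = ν S := by
    intro t S hS
    rw [← Measure.map_apply (measurable_shift _) hS, hshift]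
  refine Measure.ext fun A hA => ?_
  rw [Measure.map_apply (measurable_Phi j) hA, Measure.map_apply measurable_Psi hA]
  -- decomposition of the preimage according to the value of lam
  have hpre : Phi j ⁻¹' A = ⋃ t : ℕ, ({x : ℤ → ℝ | lam E j x = t} ∩ Phit t ⁻¹' A) := by
    ext x
    simp only [Set.mem_preimage, Set.mem_iUnion, Set.mem_inter_iff, Set.mem_setOf_eq]
    constructor
    · intro h
      exact ⟨lam E j x, rfl, h⟩
    · rintro ⟨t, ht, h⟩
      have : Phit t x = Phi j x := by
        funext i
        show x ((t : ℤ) - (i : ℤ)) = x ((lam E j x : ℤ) - (i : ℤ))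
        rw [ht]
      rwa [this] at h
  have hmeaspiece : ∀ t : ℕ, MeasurableSet ({x : ℤ → ℝ | lam E j x = t} ∩ Phit t ⁻¹' A) :=
    fun t => (measurable_lam j (measurableSet_singleton t)).inter (measurable_Phit t hA)
  -- each piece transported back by the shift
  have hkey : ∀ t : ℕ, shift (-(t : ℤ)) ⁻¹' ({x : ℤ → ℝ | lam E j x = t} ∩ Phit t ⁻¹' A) =
      Bset j t ∩ Psi ⁻¹' A := by
    intro t
    ext x
    simp only [Set.mem_preimage, Set.mem_inter_iff, Set.mem_setOf_eq, Bset]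
    have he : Phit t (shift (-(t : ℤ)) x) = Psi x := by
      funext i
      show x ((t : ℤ) - (i : ℤ) + -(t : ℤ)) = x (-(i : ℤ))
      congr 1
      ring
    rw [he]
  have hBG : ∀ t : ℕ, ∀ C : Set (ℤ → ℝ), MeasurableSet C →
      ν (Bset j t ∩ C) = ν ((Bset j t ∩ GoodAll) ∩ C) := by
    intro t C _
    rw [Set.inter_right_comm]
    rw [measure_inter_conull hGnull]
  -- total mass of the B sets
  have hBt : ∀ t : ℕ, ν (Bset j t) = ν {x : ℤ → ℝ | lam E j x = t} := by
    intro t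
    exact hmp t _ (measurable_lam j (measurableSet_singleton t))
  have hUcompl : ν (⋃ t : ℕ, (Bset j t ∩ GoodAll))ᶜ = 0 := by
    have hUmeas : MeasurableSet (⋃ t : ℕ, (Bset j t ∩ GoodAll)) :=
      MeasurableSet.iUnion fun t => (measurableSet_Bset j t).inter measurableSet_goodAll
    have hsum : ν (⋃ t : ℕ, (Bset j t ∩ GoodAll)) = 1 := by
      rw [measure_iUnion (Bset_pairwise_disjoint j)
        (fun t => (measurableSet_Bset j t).inter measurableSet_goodAll)]
      have h1 : ∀ t : ℕ, ν (Bset j t ∩ GoodAll) = ν {x : ℤ → ℝ | lam E j x = t} := by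
        intro t
        rw [measure_inter_conull hGnull, hBt t]
      rw [tsum_congr h1]
      have h2 : (⋃ t : ℕ, {x : ℤ → ℝ | lam E j x = t}) = Set.univ := by
        ext x
        simp only [Set.mem_iUnion, Set.mem_setOf_eq, Set.mem_univ, iff_true]
        exact ⟨lam E j x, rfl⟩
      have hsets : ∀ t : ℕ, MeasurableSet {x : ℤ → ℝ | lam E j x = t} :=
        fun t => measurable_lam j (measurableSet_singleton t)
      have hdisj : Pairwise (Function.onFun Disjoint fun t : ℕ => {x : ℤ → ℝ | lam E j x = t}) := by
        intro s t hst
        rw [Function.onFun, Set.disjoint_left]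
        rintro x h1 h2
        rw [Set.mem_setOf_eq] at h1 h2
        exact hst (by rw [← h1, ← h2])
      rw [← measure_iUnion hdisj hsets, h2, measure_univ]
    rw [measure_compl hUmeas (measure_ne_top ν _), hsum, measure_univ, tsub_self]
  calc ν (Phi j ⁻¹' A)
      = ∑' t : ℕ, ν ({x : ℤ → ℝ | lam E j x = t} ∩ Phit t ⁻¹' A) := by
        rw [hpre, measure_iUnion (lamfib_pairwise_disjoint j A) hmeaspiece]
    _ = ∑' t : ℕ, ν ((Bset j t ∩ GoodAll) ∩ Psi ⁻¹' A) := by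
        refine tsum_congr fun t => ?_
        rw [← hmp t _ (hmeaspiece t), hkey t, hBG t _ (measurable_Psi hA)]
    _ = ν (⋃ t : ℕ, ((Bset j t ∩ GoodAll) ∩ Psi ⁻¹' A)) := by
        rw [measure_iUnion ?_ (fun t =>
          ((measurableSet_Bset j t).inter measurableSet_goodAll).inter (measurable_Psi hA))]
        intro s t hst
        exact Set.disjoint_of_subset Set.inter_subset_left Set.inter_subset_left
          (Bset_pairwise_disjoint j hst)
    _ = ν ((⋃ t : ℕ, (Bset j t ∩ GoodAll)) ∩ Psi ⁻¹' A) := by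
        rw [Set.iUnion_inter]
    _ = ν (Psi ⁻¹' A) := by
        rw [Set.inter_comm, measure_inter_conull hUcompl]

lemma lam_path {Ω : Type*} (X : ℤ → Ω → ℝ) (j : ℕ) (ω : Ω) :
    lam X j ω = lam E j (fun i => X i ω) := by
  induction j with
  | zero => rfl
  | succ j ih =>
    simp only [lam, ih]
    rfl

lemma tildeX_path {Ω : Type*} (X : ℤ → Ω → ℝ) (n : ℕ) (ω : Ω) :
    tildeX X n ω = tildeX E n (fun i => X i ω) := by
  unfold tildeX
  congr 1
  funext j
  rw [lam_path X j ω]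
  rfl

lemma good_of_fin {Ω : Type*} (X : ℤ → Ω → ℝ) (ω : Ω)
    (h : ∀ n : ℕ, {t : ℕ | 0 < t ∧ ∀ i : ℕ, i ≤ lam X n ω →
      qcell (n + 1) (X ((t : ℤ) + (i : ℤ)) ω) = qcell (n + 1) (X (i : ℤ) ω)}.Nonempty) :
    Good (fun i => X i ω) := by
  intro n
  obtain ⟨t, ht⟩ := h n
  refine ⟨t, ht.1, fun i hi => ?_⟩
  rw [← lam_path] at hi
  exact ht.2 i hi

end Stmt9

open scoped ENNReal NNReal in
open Stmt9 in
/-- The one-sided process `{tilde X_n}_{n ≤ 0}` of limiting values along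
the stopping times has the same distribution as the one-sided original process
`{X_n}_{n ≤ 0}` (indexing by `i : ℕ` the coordinate at time `-i`). -/
theorem stmt9 {Ω : Type*} [MeasurableSpace Ω] (μ : Measure Ω) [IsProbabilityMeasure μ]
    (X : ℤ → Ω → ℝ) (hmeas : ∀ i, Measurable (X i))
    (hstat : IsStationaryReal μ X)
    (hfin : LamFinite μ X) :
    μ.map (fun ω => fun i : ℕ => tildeX X i ω) =
    μ.map (fun ω => fun i : ℕ => X (-(i : ℤ)) ω) := by
  classical
  set pmap : Ω → (ℤ → ℝ) := fun ω => fun i : ℤ => X i ω with hpmap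
  have hpm : Measurable pmap := measurable_pi_lambda _ fun i => hmeas i
  set ν : Measure (ℤ → ℝ) := μ.map pmap with hν
  haveI : IsProbabilityMeasure ν := Measure.isProbabilityMeasure_map hpm.aemeasurable
  have hshift : ∀ k : ℤ, ν.map (shift k) = ν := by
    intro k
    rw [hν, Measure.map_map (measurable_shift k) hpm]
    have he : shift k ∘ pmap = fun ω => fun i : ℤ => X (i + k) ω := rfl
    rw [he]
    exact hstat k
  have hgood_ν : ∀ᵐ x ∂ν, Good x := by
    rw [hν, ae_map_iff hpm.aemeasurable measurableSet_good]
    filter_upwards [hfin] with ω hω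
    exact good_of_fin X ω hω
  have hgoodall : ∀ᵐ x ∂ν, x ∈ GoodAll := by
    have hk : ∀ k : ℤ, ∀ᵐ x ∂ν, Good (shift k x) := by
      intro k
      have h1 : ∀ᵐ x ∂(ν.map (shift k)), Good x := by
        rw [hshift k]
        exact hgood_ν
      exact (ae_map_iff (measurable_shift k).aemeasurable measurableSet_good).mp h1
    exact ae_all_iff.mpr hk
  set tF : (ℤ → ℝ) → (ℕ → ℝ) := fun x => fun i : ℕ => tildeX E i x with htF
  have htend : ∀ᵐ x ∂ν, Tendsto (fun j => Phi j x) atTop (𝓝 (tF x)) := by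
    filter_upwards [hgood_ν] with x hx
    rw [tendsto_pi_nhds]
    intro i
    exact Good.tendsto_tildeX hx i
  have hAE : AEMeasurable tF ν :=
    aemeasurable_of_tendsto_metrizable_ae atTop
      (fun j => (measurable_Phi j).aemeasurable) htend
  haveI : IsProbabilityMeasure (ν.map tF) := Measure.isProbabilityMeasure_map hAE
  have hlaw : ∀ j, ν.map (Phi j) = ν.map Psi := law_Phi hshift hgoodall
  have hlaws : ν.map tF = ν.map Psi := by
    apply MeasureTheory.ext_of_forall_lintegral_eq_of_IsFiniteMeasure
    intro f
    have hfm : Measurable fun y : ℕ → ℝ => (f y : ℝ≥0∞) :=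
      measurable_coe_nnreal_ennreal.comp f.continuous.measurable
    have hj : ∀ j, ∫⁻ x, (f (Phi j x) : ℝ≥0∞) ∂ν = ∫⁻ x, (f (Psi x) : ℝ≥0∞) ∂ν := by
      intro j
      rw [← lintegral_map hfm (measurable_Phi j), ← lintegral_map hfm measurable_Psi, hlaw j]
    have hdom : Tendsto (fun j => ∫⁻ x, (f (Phi j x) : ℝ≥0∞) ∂ν) atTop
        (𝓝 (∫⁻ x, (f (tF x) : ℝ≥0∞) ∂ν)) := by
      refine tendsto_lintegral_of_dominated_convergence (fun _ => ((nndist (0 : BoundedContinuousFunction (ℕ → ℝ) ℝ≥0) f : ℝ≥0) : ℝ≥0∞))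
        (fun j => hfm.comp (measurable_Phi j)) (fun j => ?_) ?_ ?_
      · refine Filter.Eventually.of_forall fun x => ?_
        exact ENNReal.coe_le_coe.mpr (f.apply_le_nndist_zero (Phi j x))
      · rw [lintegral_const]
        exact ENNReal.mul_ne_top ENNReal.coe_ne_top (measure_ne_top ν _)
      · filter_upwards [htend] with x hx
        exact ENNReal.tendsto_coe.mpr ((f.continuous.tendsto _).comp hx)
    have hconst : Tendsto (fun j => ∫⁻ x, (f (Phi j x) : ℝ≥0∞) ∂ν) atTop
        (𝓝 (∫⁻ x, (f (Psi x) : ℝ≥0∞) ∂ν)) := by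
      simp only [hj]
      exact tendsto_const_nhds
    have hmain := tendsto_nhds_unique hdom hconst
    rw [lintegral_map' hfm.aemeasurable hAE, lintegral_map hfm measurable_Psi]
    exact hmain
  have h1 : (fun ω => fun i : ℕ => tildeX X i ω) = tF ∘ pmap := by
    funext ω
    funext i
    exact tildeX_path X i ω
  have h2 : (fun ω => fun i : ℕ => X (-(i : ℤ)) ω) = Psi ∘ pmap := rfl
  rw [h1, h2, ← AEMeasurable.map_map_of_aemeasurable hAE hpm.aemeasurable,
    ← Measure.map_map measurable_Psi hpm]
  exact hlaws

end
end

section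
/- For the counterexample process, if x_i ∈ A_i for i = 1, 2, …, j, then for every j ≥ 1: P( X_{λ_j} = x_j | X_0^1 = (0,1), X_{λ_m} = x_m for 1 ≤ m < j ) = P( X_1 = x_j | X_0 = 1, X_1 ∈ A_{j-1} ). -/
open MeasureTheory Filter Topology

noncomputable section

variable {Ω : Type*}

/-- Stationarity of a two-sided real valued process. -/
def IsStationaryProcess [MeasurableSpace Ω] (μ : Measure Ω) (X : ℤ → Ω → ℝ) : Prop :=
  ∀ k : ℤ, μ.map (fun ω => fun i : ℤ => X (i + k) ω) = μ.map (fun ω => fun i : ℤ => X i ω)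

end

noncomputable section

/-- The transition matrix of the counterexample Markov chain on the nonnegative
integers. -/
def K (i j : ℕ) : ℝ :=
  if i = 0 then (if j = 0 ∨ j = 1 then 1 / 2 else 0)
  else if i = 1 then (if j = 0 then 1 / 2 else if 2 ≤ j then (2 : ℝ) ^ (-(j : ℤ)) else 0)
  else if j = 0 then 1 else 0

/-- The stationary distribution of the counterexample chain. -/
def piDist (i : ℕ) : ℝ :=
  if i = 0 then 4 / 7 else if i = 1 then 2 / 7 else (1 / 7) * (2 : ℝ) ^ (1 - (i : ℤ))

/-- `M` is (a two-sided stationary version of) the counterexample Markov chain: for every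
starting time `n`, the finite dimensional distributions are those of the stationary
Markov chain with transition matrix `K` and one-dimensional marginal `piDist`. -/
def IsCounterexampleChain {Ω : Type*} [MeasurableSpace Ω] (μ : Measure Ω)
    (M : ℤ → Ω → ℕ) : Prop :=
  (∀ n, Measurable (M n)) ∧
  ∀ (n : ℤ) (m : ℕ) (a : ℕ → ℕ),
    (μ {ω | ∀ k ≤ m, M (n + k) ω = a k}).toReal =
      piDist (a 0) * ∏ k ∈ Finset.range m, K (a k) (a (k + 1))

/-- The map `h`: `h 0 = 0`, `h 1 = 1`, `h i = 2^{-2^i}/2` for `i ≥ 2`. -/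
def hmap (i : ℕ) : ℝ :=
  if i = 0 then 0 else if i = 1 then 1 else (2 : ℝ) ^ (-(2 ^ i : ℤ)) / 2

/-- `A n = { h(i) : h(i) < 2^{-(n+1)} }`. -/
def A (n : ℕ) : Set ℝ := {x | (∃ i, hmap i = x) ∧ x < (2 : ℝ) ^ (-(n : ℤ) - 1)}

open ProbabilityTheory

namespace S15

lemma hmap_zero : hmap 0 = 0 := rfl
lemma hmap_one : hmap 1 = 1 := rfl

lemma hmap_big {a : ℕ} (ha : 2 ≤ a) : hmap a = (2 : ℝ) ^ (-(2 ^ a : ℤ) - 1) := by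
  have h0 : a ≠ 0 := by omega
  have h1 : a ≠ 1 := by omega
  rw [hmap, if_neg h0, if_neg h1, zpow_sub₀ (by norm_num : (2:ℝ) ≠ 0), zpow_one]

lemma hmap_nonneg (a : ℕ) : 0 ≤ hmap a := by
  rcases Nat.lt_or_ge a 2 with h | h
  · interval_cases a <;> norm_num [hmap]
  · rw [hmap_big h]; positivity

lemma hmap_le_one (a : ℕ) : hmap a ≤ 1 := by
  rcases Nat.lt_or_ge a 2 with h | h
  · interval_cases a <;> norm_num [hmap]
  · rw [hmap_big h]
    calc (2:ℝ) ^ (-(2 ^ a : ℤ) - 1) ≤ (2:ℝ) ^ (0:ℤ) := by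
          apply zpow_le_zpow_right₀ (by norm_num)
          have : (0:ℤ) < 2 ^ a := by positivity
          omega
      _ = 1 := by norm_num

lemma hmap_lt_half {a : ℕ} (ha : a ≠ 1) : hmap a < 1/2 := by
  rcases Nat.lt_or_ge a 2 with h | h
  · interval_cases a
    · norm_num [hmap]
    · omega
  · rw [hmap_big h]
    have h5 : (2:ℝ) ^ (-(2 ^ a : ℤ) - 1) < (2:ℝ) ^ (-1 : ℤ) := by
      apply zpow_lt_zpow_right₀ (by norm_num)
      have : (0:ℤ) < 2 ^ a := by positivity
      omega
    calc (2:ℝ) ^ (-(2 ^ a : ℤ) - 1) < (2:ℝ) ^ (-1 : ℤ) := h5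
      _ = 1/2 := by norm_num

lemma hmap_lt_one {a : ℕ} (ha : a ≠ 1) : hmap a < 1 := by
  have := hmap_lt_half ha; linarith

lemma hmap_big_lt {a : ℕ} (ha : 2 ≤ a) {n : ℕ} (hn : (n:ℤ) ≤ 2 ^ a) :
    hmap a < (2:ℝ) ^ (-(n:ℤ)) := by
  rw [hmap_big ha]
  apply zpow_lt_zpow_right₀ (by norm_num)
  omega

lemma hmap_inj : Function.Injective hmap := by
  have key : ∀ a b : ℕ, 2 ≤ a → 2 ≤ b → a < b → hmap b < hmap a := by
    intro a b ha hb hab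
    rw [hmap_big ha, hmap_big hb]
    apply zpow_lt_zpow_right₀ (by norm_num)
    have : (2:ℤ) ^ a < 2 ^ b := by
      exact_mod_cast Nat.pow_lt_pow_right (by norm_num) hab
    omega
  intro a b hab
  by_contra hne
  wlog h : a < b generalizing a b
  · exact this hab.symm (Ne.symm hne) (by omega)
  rcases Nat.lt_or_ge a 2 with h2 | h2
  · rcases Nat.lt_or_ge b 2 with h3 | h3
    · interval_cases a <;> interval_cases b <;> simp_all <;> norm_num [hmap] at hab
    · have hb := hmap_lt_half (a := b) (by omega)
      have hb0 : 0 < hmap b := by rw [hmap_big h3]; positivity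
      interval_cases a
      · rw [hmap_zero] at hab; linarith
      · rw [hmap_one] at hab; linarith
  · exact absurd hab (ne_of_gt (key a b h2 (by omega) h))

lemma qcell_zero (n : ℕ) : qcell n 0 = 0 := by simp [qcell]

lemma qcell_one (n : ℕ) : qcell n 1 = 2 ^ n := by
  rw [qcell, one_mul]
  rw [show ((2:ℝ) ^ n) = ((2 ^ n : ℤ) : ℝ) by push_cast; ring]
  exact Int.floor_intCast _

lemma qcell_eq_zero_iff {n : ℕ} {y : ℝ} (hy : 0 ≤ y) :
    qcell n y = 0 ↔ y < (2:ℝ) ^ (-(n:ℤ)) := by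
  have h2 : (0:ℝ) < 2 ^ n := by positivity
  rw [qcell, Int.floor_eq_zero_iff, Set.mem_Ico, zpow_neg, zpow_natCast,
    inv_eq_one_div, lt_div_iff₀ h2]
  constructor
  · exact fun h => h.2
  · exact fun h => ⟨by positivity, h⟩

lemma qcell_hmap_eq_pow_iff {m : ℕ} {a : ℕ} : qcell m (hmap a) = 2 ^ m ↔ a = 1 := by
  constructor
  · intro h
    by_contra ha
    have h1 : hmap a < 1 := hmap_lt_one ha
    have : qcell m (hmap a) < 2 ^ m := by
      rw [qcell, Int.floor_lt]
      push_cast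
      have h2 : (0:ℝ) < 2 ^ m := by positivity
      nlinarith
    omega
  · rintro rfl; rw [hmap_one]; exact qcell_one m

/-- membership in `A n` style bound gives level-`n` cell 0 -/
lemma qcell_eq_zero_of_lt {n : ℕ} {y : ℝ} (hy : 0 ≤ y) (h : y < (2:ℝ) ^ (-(n:ℤ))) :
    qcell n y = 0 := (qcell_eq_zero_iff hy).2 h

/-! ### path-level stopping times -/

/-- match set -/
def MS (v : ℕ → ℕ) (ℓ n : ℕ) : Set ℕ :=
  {t | 0 < t ∧ ∀ i ≤ ℓ, qcell n (hmap (v (t + i))) = qcell n (hmap (v i))}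

def lamW (v : ℕ → ℕ) : ℕ → ℕ
  | 0 => 0
  | n + 1 => lamW v n + sInf (MS v (lamW v n) (n + 1))

/-- the first `n` stages all have nonempty match sets -/
def IncrTo (n : ℕ) (v : ℕ → ℕ) : Prop :=
  ∀ m < n, (MS v (lamW v m) (m + 1)).Nonempty

/-- prefix conditions: starts with 0, 1 and hits the `x m` at the stopping times -/
def BP (x : ℕ → ℝ) (n : ℕ) (v : ℕ → ℕ) : Prop :=
  v 0 = 0 ∧ v 1 = 1 ∧ ∀ m, 1 ≤ m → m < n → hmap (v (lamW v m)) = x m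

lemma Nat.sInf_eq' {s : Set ℕ} {t : ℕ} (h : t ∈ s) (h2 : ∀ t' < t, t' ∉ s) :
    sInf s = t := by
  refine le_antisymm (Nat.sInf_le h) ?_
  by_contra hlt
  exact h2 _ (by omega) (Nat.sInf_mem ⟨t, h⟩)

lemma lamW_mono (v : ℕ → ℕ) : Monotone (lamW v) := by
  apply monotone_nat_of_le_succ
  intro n
  simp [lamW]

lemma lamW_succ_of_nonempty {v : ℕ → ℕ} {n : ℕ} (h : (MS v (lamW v n) (n+1)).Nonempty) :
    lamW v n < lamW v (n+1) ∧ (lamW v (n+1) - lamW v n) ∈ MS v (lamW v n) (n+1) := by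
  have hmem := Nat.sInf_mem h
  have hpos : 0 < sInf (MS v (lamW v n) (n+1)) := hmem.1
  constructor
  · show lamW v n < lamW v n + sInf (MS v (lamW v n) (n+1))
    omega
  · show (lamW v n + sInf (MS v (lamW v n) (n+1))) - lamW v n ∈ _
    simpa using hmem

lemma lamW_strict {v : ℕ → ℕ} {n : ℕ} (h : IncrTo n v) :
    StrictMonoOn (lamW v) (Set.Iic n) := by
  intro a ha b hb hab
  simp only [Set.mem_Iic] at ha hb
  have : ∀ c, c < n → lamW v c < lamW v (c+1) :=
    fun c hc => (lamW_succ_of_nonempty (h c hc)).1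
  calc lamW v a < lamW v (a+1) := this a (by omega)
    _ ≤ lamW v b := lamW_mono v (by omega)

/-- **L2: structure lemma.** -/
lemma struct {x : ℕ → ℝ} {n : ℕ} {v : ℕ → ℕ}
    (hbp : BP x n v) (hinc : IncrTo n v)
    (hx : ∀ m, 1 ≤ m → m < n → 0 ≤ x m ∧ x m < (2:ℝ) ^ (-(m:ℤ) - 1)) :
    ∀ m, 1 ≤ m → m ≤ n →
      2 ≤ lamW v m ∧ v (lamW v m - 1) = 1 ∧ qcell m (hmap (v (lamW v m))) = 0 := by
  intro m
  induction m with
  | zero => omega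
  | succ m ih =>
    intro _ hmn
    rcases Nat.eq_zero_or_pos m with rfl | hm1
    · -- base case: stage 1
      have hne := hinc 0 (by omega)
      obtain ⟨hlt, hmem⟩ := lamW_succ_of_nonempty hne
      simp only [Nat.zero_add] at hlt hmem ⊢
      have hl0 : lamW v 0 = 0 := rfl
      rw [hl0] at hlt hmem
      rw [Nat.sub_zero] at hmem
      have hq0 : qcell 1 (hmap (v (lamW v 1))) = 0 := by
        have h := hmem.2 0 (le_refl 0)
        rwa [Nat.add_zero, hbp.1, hmap_zero, qcell_zero] at h
      have ht1 : lamW v 1 ≠ 1 := by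
        intro h1
        rw [h1, hbp.2.1, hmap_one, qcell_one] at hq0; norm_num at hq0
      have ht2 : 2 ≤ lamW v 1 := by omega
      refine ⟨ht2, ?_, hq0⟩
      have hnot : (lamW v 1 - 1) ∉ MS v (lamW v 0) 1 := by
        apply Nat.notMem_of_lt_sInf
        have hrec : lamW v 1 = lamW v 0 + sInf (MS v (lamW v 0) 1) := rfl
        omega
      rw [hl0] at hnot
      by_contra hv1
      apply hnot
      refine ⟨by omega, ?_⟩
      intro i hi
      interval_cases i
      rw [Nat.add_zero, hbp.1, hmap_zero, qcell_zero]
      apply (qcell_eq_zero_iff (hmap_nonneg _)).2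
      calc hmap (v (lamW v 1 - 1)) < 1/2 := hmap_lt_half hv1
        _ ≤ (2:ℝ) ^ (-((1:ℕ):ℤ)) := by norm_num
    · -- inductive step: stage m+1, m ≥ 1
      have ihm := ih (by omega) (by omega)
      obtain ⟨hl2, hv1, _⟩ := ihm
      have hne := hinc m (by omega)
      obtain ⟨hlt, hmem⟩ := lamW_succ_of_nonempty hne
      set ℓ := lamW v m with hℓ
      set t0 := lamW v (m+1) - ℓ with ht0
      have ht0pos : 0 < t0 := hmem.1
      have hsum : t0 + ℓ = lamW v (m+1) := by omega
      have h2 : 2 ≤ lamW v (m+1) := by omega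
      refine ⟨h2, ?_, ?_⟩
      · -- position ℓ - 1
        have hcond := hmem.2 (ℓ - 1) (by omega)
        rw [hv1, hmap_one, qcell_one] at hcond
        have hidx : t0 + (ℓ - 1) = lamW v (m+1) - 1 := by omega
        rw [hidx] at hcond
        exact qcell_hmap_eq_pow_iff.1 hcond
      · -- position ℓ
        have hcond := hmem.2 ℓ le_rfl
        have hxv : hmap (v ℓ) = x m := hbp.2.2 m (by omega) (by omega)
        rw [hxv] at hcond
        have hxm := hx m (by omega) (by omega)
        have hq : qcell (m+1) (x m) = 0 := by
          apply qcell_eq_zero_of_lt hxm.1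
          have hexp : -((m:ℤ)) - 1 = -(((m+1:ℕ)):ℤ) := by push_cast; ring
          rw [← hexp]
          exact hxm.2
        rw [hq, hsum] at hcond
        exact hcond


/-- **L1: determinacy lemma.** -/
lemma detm {v v' : ℕ → ℕ} {n : ℕ} (hinc : IncrTo n v)
    (hag : ∀ i < lamW v n, v' i = v i)
    (hc : qcell n (hmap (v' (lamW v n))) = qcell n (hmap (v (lamW v n)))) :
    ∀ m, m ≤ n → lamW v' m = lamW v m ∧
      ∀ m' < m, (MS v' (lamW v' m') (m' + 1)).Nonempty := by
  intro m
  induction m with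
  | zero => exact fun _ => ⟨rfl, fun m' h => by omega⟩
  | succ m ih =>
    intro hmn
    obtain ⟨ℓeq, hnes⟩ := ih (by omega)
    set ℓ := lamW v m with hℓ
    have hne := hinc m (by omega)
    set t0 := sInf (MS v ℓ (m+1)) with ht0def
    have hmem : t0 ∈ MS v ℓ (m+1) := Nat.sInf_mem hne
    have hrec : lamW v (m+1) = ℓ + t0 := rfl
    have hmono : lamW v (m+1) ≤ lamW v n := lamW_mono v hmn
    have hstrict := lamW_strict hinc
    have ht0pos : 0 < t0 := hmem.1
    have hℓlt : ℓ < lamW v n := by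
      calc ℓ < lamW v (m+1) := by omega
        _ ≤ lamW v n := hmono
    -- t0 ∈ MS v' ℓ (m+1)
    have hmem' : t0 ∈ MS v' ℓ (m+1) := by
      refine ⟨hmem.1, fun i hi => ?_⟩
      have hvi : v' i = v i := hag i (by omega)
      rcases Nat.lt_or_ge (t0 + i) (lamW v n) with hlt | hge
      · rw [hvi, hag _ hlt]
        exact hmem.2 i hi
      · -- t0 + i = lamW v n, forcing m+1 = n and i = ℓ
        have h1 : t0 + i ≤ lamW v (m+1) := by omega
        have heq1 : t0 + i = lamW v n := by omega
        have heq2 : lamW v (m+1) = lamW v n := by omega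
        have hmeqn : m + 1 = n := by
          by_contra hne2
          have : lamW v (m+1) < lamW v n :=
            hstrict (Set.mem_Iic.2 hmn) (Set.mem_Iic.2 le_rfl) (by omega)
          omega
        have hieq : i = ℓ := by omega
        subst hieq hmeqn
        rw [heq1, hvi, hc, ← heq1]
        exact hmem.2 _ hi
    -- minimality transfers
    have hmin' : ∀ t' < t0, t' ∉ MS v' ℓ (m+1) := by
      intro t' ht' hmem2
      have : t' ∈ MS v ℓ (m+1) := by
        refine ⟨hmem2.1, fun i hi => ?_⟩
        have h1 : t' + i < lamW v n := by
          calc t' + i < t0 + ℓ := by omega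
            _ = lamW v (m+1) := by omega
            _ ≤ lamW v n := hmono
        have := hmem2.2 i hi
        rwa [hag _ h1, hag i (by omega)] at this
      exact Nat.notMem_of_lt_sInf (by omega) this
    have hsinf : sInf (MS v' ℓ (m+1)) = t0 := Nat.sInf_eq' hmem' hmin'
    have hlam' : lamW v' (m+1) = lamW v (m+1) := by
      show lamW v' m + sInf (MS v' (lamW v' m) (m+1)) = lamW v (m+1)
      rw [ℓeq, hsinf, hrec]
    refine ⟨hlam', fun m' hm' => ?_⟩
    rcases Nat.lt_or_ge m' m with h | h
    · exact hnes m' h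
    · have : m' = m := by omega
      subst this
      rw [ℓeq]
      exact ⟨t0, hmem'⟩

/-- transfer of the prefix conditions along determinacy -/
lemma detm_BP {x : ℕ → ℝ} {v v' : ℕ → ℕ} {n : ℕ} (hinc : IncrTo n v)
    (hag : ∀ i < lamW v n, v' i = v i)
    (hc : qcell n (hmap (v' (lamW v n))) = qcell n (hmap (v (lamW v n))))
    (hbp : BP x n v) (h2 : 2 ≤ lamW v n) :
    BP x n v' := by
  refine ⟨by rw [hag 0 (by omega)]; exact hbp.1, by rw [hag 1 (by omega)]; exact hbp.2.1,
    fun m hm1 hmn => ?_⟩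
  have hlam := (detm hinc hag hc m (by omega)).1
  have hlt : lamW v m < lamW v n := lamW_strict hinc (Set.mem_Iic.2 (by omega))
    (Set.mem_Iic.2 le_rfl) hmn
  rw [hlam, hag _ hlt]
  exact hbp.2.2 m hm1 hmn


/-! ### prefixes as lists -/

def extL (l : List ℕ) : ℕ → ℕ := fun i => l.getD i 0

/-- valid prefixes at stage `n` -/
def VP (x : ℕ → ℝ) (n : ℕ) : Set (List ℕ) :=
  {l | BP x n (extL l) ∧ IncrTo n (extL l) ∧ lamW (extL l) n = l.length}

lemma extL_lt {l : List ℕ} {i : ℕ} (h : i < l.length) : extL l i = l.getD i 0 := rfl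

lemma extL_ofFn {L : ℕ} (v : ℕ → ℕ) {i : ℕ} (h : i < L) :
    extL (List.ofFn (fun i : Fin L => v i)) i = v i := by
  unfold extL
  rw [List.getD_eq_getElem _ _ (by simpa using h), List.getElem_ofFn]

lemma extL_ge {l : List ℕ} {i : ℕ} (h : l.length ≤ i) : extL l i = 0 :=
  List.getD_eq_default _ _ h

/-- **Claim A**: a good path gives a valid prefix. -/
lemma claimA {x : ℕ → ℝ} {n : ℕ} {v : ℕ → ℕ} (hn : 1 ≤ n)
    (hbp : BP x n v) (hinc : IncrTo n v)
    (hx : ∀ m, 1 ≤ m → m < n → 0 ≤ x m ∧ x m < (2:ℝ) ^ (-(m:ℤ) - 1)) :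
    List.ofFn (fun i : Fin (lamW v n) => v i) ∈ VP x n ∧
      qcell n (hmap (v (lamW v n))) = 0 := by
  obtain ⟨h2, hv1, hq0⟩ := struct hbp hinc hx n hn le_rfl
  set L := lamW v n with hL
  set l := List.ofFn (fun i : Fin L => v i) with hl
  have hlen : l.length = L := List.length_ofFn
  have hag : ∀ i < lamW v n, extL l i = v i := fun i hi => extL_ofFn v hi
  have hc : qcell n (hmap (extL l (lamW v n))) = qcell n (hmap (v (lamW v n))) := by
    rw [extL_ge (by omega), hmap_zero, qcell_zero, ← hL, hq0]
  have hdet := detm hinc hag hc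
  refine ⟨⟨detm_BP hinc hag hc hbp h2, ?_, ?_⟩, hq0⟩
  · intro m hm
    exact (hdet (m+1) (by omega)).2 m (by omega)
  · rw [(hdet n le_rfl).1, hlen]

/-- **Claim B**: a valid prefix followed by a cell-0 symbol reproduces the conditions. -/
lemma claimB {x : ℕ → ℝ} {n : ℕ} {l : List ℕ} {v' : ℕ → ℕ} (hn : 1 ≤ n)
    (hx : ∀ m, 1 ≤ m → m < n → 0 ≤ x m ∧ x m < (2:ℝ) ^ (-(m:ℤ) - 1))
    (hl : l ∈ VP x n) (hag : ∀ i < l.length, v' i = extL l i)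
    (hc : qcell n (hmap (v' l.length)) = 0) :
    BP x n v' ∧ lamW v' n = l.length ∧ IncrTo n v' := by
  obtain ⟨hbp, hinc, hlam⟩ := hl
  obtain ⟨h2, _, _⟩ := struct hbp hinc hx n hn le_rfl
  have hag' : ∀ i < lamW (extL l) n, v' i = extL l i := fun i hi => hag i (by omega)
  have hc' : qcell n (hmap (v' (lamW (extL l) n))) = qcell n (hmap (extL l (lamW (extL l) n))) := by
    rw [hlam, extL_ge le_rfl, hmap_zero, qcell_zero, hc]
  have hdet := detm hinc hag' hc'
  refine ⟨detm_BP hinc hag' hc' hbp h2, ?_, ?_⟩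
  · rw [(hdet n le_rfl).1, hlam]
  · intro m hm
    exact (hdet (m+1) (by omega)).2 m (by omega)

/-- key structural facts for a valid prefix itself -/
lemma VP_struct {x : ℕ → ℝ} {n : ℕ} {l : List ℕ} (hn : 1 ≤ n)
    (hx : ∀ m, 1 ≤ m → m < n → 0 ≤ x m ∧ x m < (2:ℝ) ^ (-(m:ℤ) - 1))
    (hl : l ∈ VP x n) :
    2 ≤ l.length ∧ l.getD (l.length - 1) 0 = 1 := by
  obtain ⟨hbp, hinc, hlam⟩ := hl
  obtain ⟨h2, hv1, _⟩ := struct hbp hinc hx n hn le_rfl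
  rw [hlam] at h2 hv1
  refine ⟨h2, ?_⟩
  rw [← extL_lt (by omega)]
  exact hv1

/-- two valid prefixes consistent with the same path agree -/
lemma VP_unique {x : ℕ → ℝ} {n : ℕ} {l l' : List ℕ} {v' : ℕ → ℕ} (hn : 1 ≤ n)
    (hx : ∀ m, 1 ≤ m → m < n → 0 ≤ x m ∧ x m < (2:ℝ) ^ (-(m:ℤ) - 1))
    (hl : l ∈ VP x n) (hag : ∀ i < l.length, v' i = extL l i)
    (hc : qcell n (hmap (v' l.length)) = 0)
    (hl' : l' ∈ VP x n) (hag' : ∀ i < l'.length, v' i = extL l' i)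
    (hc' : qcell n (hmap (v' l'.length)) = 0) : l = l' := by
  have h1 := claimB hn hx hl hag hc
  have h2 := claimB hn hx hl' hag' hc'
  have hlen : l.length = l'.length := by rw [← h1.2.1, ← h2.2.1]
  apply List.ext_getElem hlen
  intro i hi1 hi2
  have e1 := hag i hi1
  have e2 := hag' i hi2
  rw [extL_lt hi1] at e1
  rw [extL_lt hi2] at e2
  rw [List.getD_eq_getElem _ _ hi1] at e1
  rw [List.getD_eq_getElem _ _ hi2] at e2
  rw [← e1, ← e2]

/-- bridge: `lam` agrees with `lamW` on the `hmap` path -/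
lemma lam_eq_lamW {Ω : Type*} (X : ℤ → Ω → ℝ) (M : ℤ → Ω → ℕ)
    (hX : ∀ n ω, X n ω = hmap (M n ω)) (ω : Ω) :
    ∀ n, lam X n ω = lamW (fun i : ℕ => M (i : ℤ) ω) n ∧
      {t : ℕ | 0 < t ∧ ∀ i : ℕ, i ≤ lam X n ω →
        qcell (n + 1) (X ((t : ℤ) + (i : ℤ)) ω) = qcell (n + 1) (X (i : ℤ) ω)} =
      MS (fun i : ℕ => M (i : ℤ) ω) (lamW (fun i : ℕ => M (i : ℤ) ω) n) (n + 1) := by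
  set v : ℕ → ℕ := fun i : ℕ => M (i : ℤ) ω with hv
  have hset : ∀ n : ℕ,
      {t : ℕ | 0 < t ∧ ∀ i : ℕ, i ≤ lamW v n →
        qcell (n + 1) (X ((t : ℤ) + (i : ℤ)) ω) = qcell (n + 1) (X (i : ℤ) ω)} =
      MS v (lamW v n) (n + 1) := by
    intro n
    ext t
    simp only [MS, Set.mem_setOf_eq]
    constructor
    · rintro ⟨ht, h⟩
      refine ⟨ht, fun i hi => ?_⟩
      have h2 := h i hi
      rwa [hX, hX, show ((t : ℤ) + (i : ℤ)) = ((t + i : ℕ) : ℤ) by push_cast; ring] at h2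
    · rintro ⟨ht, h⟩
      refine ⟨ht, fun i hi => ?_⟩
      have h2 := h i hi
      rw [hX, hX, show ((t : ℤ) + (i : ℤ)) = ((t + i : ℕ) : ℤ) by push_cast; ring]
      exact h2
  intro n
  induction n with
  | zero => exact ⟨rfl, hset 0⟩
  | succ n ih =>
    have hlam : lam X (n+1) ω = lamW v (n+1) := by
      show lam X n ω + sInf _ = lamW v n + sInf _
      rw [ih.1, hset n]
    refine ⟨hlam, ?_⟩
    have h3 : {t : ℕ | 0 < t ∧ ∀ i : ℕ, i ≤ lam X (n+1) ω →
        qcell (n + 1 + 1) (X ((t : ℤ) + (i : ℤ)) ω) = qcell (n + 1 + 1) (X (i : ℤ) ω)} =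
        {t : ℕ | 0 < t ∧ ∀ i : ℕ, i ≤ lamW v (n+1) →
        qcell (n + 1 + 1) (X ((t : ℤ) + (i : ℤ)) ω) = qcell (n + 1 + 1) (X (i : ℤ) ω)} := by
      rw [hlam]
    rw [h3]
    exact hset (n+1)


/-! ### measurability of `lamW` -/

lemma measSet_mem_MS (t ℓ n : ℕ) : MeasurableSet {v : ℕ → ℕ | t ∈ MS v ℓ n} := by
  have : {v : ℕ → ℕ | t ∈ MS v ℓ n} =
      {v : ℕ → ℕ | 0 < t} ∩ ⋂ i ∈ Finset.Iic ℓ,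
        {v : ℕ → ℕ | qcell n (hmap (v (t + i))) = qcell n (hmap (v i))} := by
    ext v
    simp [MS, Set.mem_setOf_eq]
  rw [this]
  apply MeasurableSet.inter
  · by_cases h : 0 < t
    · simp [h]
    · simp [h]
  · apply MeasurableSet.biInter (Finset.Iic ℓ).countable_toSet
    intro i _
    have : {v : ℕ → ℕ | qcell n (hmap (v (t + i))) = qcell n (hmap (v i))} =
        (fun v : ℕ → ℕ => (v (t + i), v i)) ⁻¹'
          {p : ℕ × ℕ | qcell n (hmap p.1) = qcell n (hmap p.2)} := rfl
    rw [this]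
    exact ((measurable_pi_apply _).prodMk (measurable_pi_apply _))
      ((Set.to_countable _).measurableSet)

lemma measSet_sInf_MS (s ℓ n : ℕ) : MeasurableSet {v : ℕ → ℕ | sInf (MS v ℓ n) = s} := by
  have hchar : {v : ℕ → ℕ | sInf (MS v ℓ n) = s} =
      ({v : ℕ → ℕ | s ∈ MS v ℓ n} ∩ ⋂ t ∈ Finset.range s, {v : ℕ → ℕ | t ∈ MS v ℓ n}ᶜ) ∪
      ({v : ℕ → ℕ | s = 0} ∩ ⋂ t : ℕ, {v : ℕ → ℕ | t ∈ MS v ℓ n}ᶜ) := by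
    ext v
    simp only [Set.mem_setOf_eq, Set.mem_union, Set.mem_inter_iff, Set.mem_iInter,
      Set.mem_compl_iff, Finset.mem_range]
    constructor
    · intro h
      rcases Set.eq_empty_or_nonempty (MS v ℓ n) with he | hne
      · right
        refine ⟨by rw [← h, he, Nat.sInf_empty], fun t ht => by rw [he] at ht; exact ht⟩
      · left
        refine ⟨by rw [← h]; exact Nat.sInf_mem hne, fun t ht => Nat.notMem_of_lt_sInf (by omega)⟩
    · rintro (⟨h1, h2⟩ | ⟨h1, h2⟩)
      · exact Nat.sInf_eq' h1 (fun t ht => h2 t ht)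
      · rw [h1]
        rw [Set.eq_empty_iff_forall_notMem.2 h2, Nat.sInf_empty]
  rw [hchar]
  apply MeasurableSet.union
  · exact (measSet_mem_MS s ℓ n).inter
      (MeasurableSet.biInter (Finset.range s).countable_toSet
        (fun t _ => (measSet_mem_MS t ℓ n).compl))
  · apply MeasurableSet.inter
    · by_cases h : s = 0 <;> simp [h]
    · exact MeasurableSet.iInter (fun t => (measSet_mem_MS t ℓ n).compl)

lemma measurable_lamW (n : ℕ) : Measurable (fun v : ℕ → ℕ => lamW v n) := by
  induction n with
  | zero => exact measurable_const
  | succ n ih =>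
    apply measurable_to_countable'
    intro c
    have : (fun v : ℕ → ℕ => lamW v (n+1)) ⁻¹' {c} =
        ⋃ ℓ ∈ Finset.Iic c, ((fun v : ℕ → ℕ => lamW v n) ⁻¹' {ℓ} ∩
          {v : ℕ → ℕ | sInf (MS v ℓ (n+1)) = c - ℓ}) := by
      ext v
      simp only [Set.mem_preimage, Set.mem_singleton_iff, Set.mem_iUnion, Set.mem_inter_iff,
        Set.mem_setOf_eq, Finset.mem_Iic]
      constructor
      · intro h
        refine ⟨lamW v n, ?_, rfl, ?_⟩
        · rw [← h]; exact lamW_mono v (by omega)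
        · have : lamW v (n+1) = lamW v n + sInf (MS v (lamW v n) (n+1)) := rfl
          omega
      · rintro ⟨ℓ, hℓc, rfl, h2⟩
        have : lamW v (n+1) = lamW v n + sInf (MS v (lamW v n) (n+1)) := rfl
        omega
    rw [this]
    apply MeasurableSet.biUnion (Finset.Iic c).countable_toSet
    intro ℓ _
    exact (ih (MeasurableSet.singleton ℓ)).inter (measSet_sInf_MS (c - ℓ) ℓ (n+1))

lemma measurable_vlam (n : ℕ) : Measurable (fun v : ℕ → ℕ => v (lamW v n)) := by
  apply measurable_to_countable'
  intro c
  have : (fun v : ℕ → ℕ => v (lamW v n)) ⁻¹' {c} =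
      ⋃ ℓ : ℕ, ((fun v : ℕ → ℕ => lamW v n) ⁻¹' {ℓ} ∩ {v : ℕ → ℕ | v ℓ = c}) := by
    ext v
    simp only [Set.mem_preimage, Set.mem_singleton_iff, Set.mem_iUnion, Set.mem_inter_iff,
      Set.mem_setOf_eq]
    constructor
    · intro h
      exact ⟨lamW v n, rfl, h⟩
    · rintro ⟨ℓ, rfl, h2⟩
      exact h2
  rw [this]
  refine MeasurableSet.iUnion (fun ℓ =>
    ((measurable_lamW n) (MeasurableSet.singleton ℓ)).inter ?_)
  have h : {v : ℕ → ℕ | v ℓ = c} = (fun v : ℕ → ℕ => v ℓ) ⁻¹' {c} := rfl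
  rw [h]
  exact (measurable_pi_apply ℓ) (MeasurableSet.singleton c)

lemma measSet_BP (x : ℕ → ℝ) (n : ℕ) : MeasurableSet {v : ℕ → ℕ | BP x n v} := by
  have : {v : ℕ → ℕ | BP x n v} =
      ({v : ℕ → ℕ | v 0 = 0} ∩ {v : ℕ → ℕ | v 1 = 1}) ∩
      ⋂ m ∈ Finset.Ico 1 n, {v : ℕ → ℕ | hmap (v (lamW v m)) = x m} := by
    ext v
    simp only [BP, Set.mem_setOf_eq, Set.mem_inter_iff, Set.mem_iInter, Finset.mem_Ico]
    constructor
    · rintro ⟨h1, h2, h3⟩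
      exact ⟨⟨h1, h2⟩, fun m hm => h3 m hm.1 hm.2⟩
    · rintro ⟨⟨h1, h2⟩, h3⟩
      exact ⟨h1, h2, fun m hm1 hm2 => h3 m ⟨hm1, hm2⟩⟩
  rw [this]
  apply MeasurableSet.inter
  · exact ((measurable_pi_apply 0) (MeasurableSet.singleton 0)).inter
      ((measurable_pi_apply 1) (MeasurableSet.singleton 1))
  · apply MeasurableSet.biInter (Finset.Ico 1 n).countable_toSet
    intro m _
    exact (measurable_vlam m) ((Set.to_countable (hmap ⁻¹' {x m})).measurableSet)

/-! ### the measure-theoretic decomposition -/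

section Meas

variable {Ω : Type*} [MeasurableSpace Ω] (μ : MeasureTheory.Measure Ω)
  [MeasureTheory.IsProbabilityMeasure μ] (M : ℤ → Ω → ℕ)

/-- the one-sided path of the chain -/
def pathM (M : ℤ → Ω → ℕ) (ω : Ω) : ℕ → ℕ := fun i => M (i : ℤ) ω

/-- cylinder event of a finite word -/
def Cyl (M : ℤ → Ω → ℕ) (l : List ℕ) : Set Ω :=
  {ω | ∀ i < l.length, M (i : ℤ) ω = extL l i}

lemma measurable_pathM (hM : ∀ n, Measurable (M n)) : Measurable (pathM M) :=
  measurable_pi_lambda _ fun i => hM i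

lemma measSet_Cyl (hM : ∀ n : ℤ, Measurable (M n)) (l : List ℕ) :
    MeasurableSet (Cyl M l) := by
  have : Cyl M l = ⋂ i ∈ Finset.range l.length, (M (i:ℤ)) ⁻¹' {extL l i} := by
    ext ω
    simp [Cyl, Set.mem_setOf_eq]
  rw [this]
  exact MeasurableSet.biInter (Finset.range l.length).countable_toSet
    (fun i _ => (hM i) (MeasurableSet.singleton _))

lemma cyl_toReal (hMc : IsCounterexampleChain μ M) (l : List ℕ) (hl : 1 ≤ l.length) :
    (μ (Cyl M l)).toReal =
      piDist (extL l 0) * ∏ k ∈ Finset.range (l.length - 1), K (extL l k) (extL l (k+1)) := by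
  have h := hMc.2 0 (l.length - 1) (extL l)
  rw [← h]
  congr 2
  ext ω
  simp only [Cyl, Set.mem_setOf_eq, zero_add]
  constructor
  · intro h2 k hk
    exact h2 k (by omega)
  · intro h2 i hi
    exact h2 i (by omega)

lemma cyl_append_set (l : List ℕ) (k : ℕ) :
    Cyl M (l ++ [k]) = Cyl M l ∩ {ω | M (l.length : ℤ) ω = k} := by
  have hext : ∀ i < l.length, extL (l ++ [k]) i = extL l i := by
    intro i hi
    show (l ++ [k]).getD i 0 = l.getD i 0
    exact List.getD_append _ _ _ _ hi
  have hlast : extL (l ++ [k]) l.length = k := by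
    show (l ++ [k]).getD l.length 0 = k
    simp
  ext ω
  simp only [Cyl, Set.mem_setOf_eq, Set.mem_inter_iff, List.length_append, List.length_cons,
    List.length_nil]
  constructor
  · intro h
    refine ⟨fun i hi => ?_, ?_⟩
    · have h2 := h i (by omega)
      rwa [hext i hi] at h2
    · have h2 := h l.length (by omega)
      rwa [hlast] at h2
  · rintro ⟨h1, h2⟩ i hi
    rcases Nat.lt_or_ge i l.length with h3 | h3
    · rw [hext i h3]
      exact h1 i h3
    · have h4 : i = l.length := by omega
      subst h4
      rw [hlast]
      exact h2

lemma cyl_append_toReal (hMc : IsCounterexampleChain μ M) (l : List ℕ) (hl : 1 ≤ l.length)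
    (k : ℕ) :
    (μ (Cyl M (l ++ [k]))).toReal =
      (μ (Cyl M l)).toReal * K (l.getD (l.length - 1) 0) k := by
  rw [cyl_toReal μ M hMc _ (by simp), cyl_toReal μ M hMc l hl]
  have hext : ∀ i < l.length, extL (l ++ [k]) i = extL l i := by
    intro i hi
    show (l ++ [k]).getD i 0 = l.getD i 0
    exact List.getD_append _ _ _ _ hi
  have hlast : extL (l ++ [k]) l.length = k := by
    show (l ++ [k]).getD l.length 0 = k
    simp
  have hlen : (l ++ [k]).length = l.length + 1 := by simp
  rw [hlen]
  have h1 : l.length + 1 - 1 = (l.length - 1) + 1 := by omega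
  rw [h1, Finset.prod_range_succ]
  have h2 : ∀ t ∈ Finset.range (l.length - 1),
      K (extL (l ++ [k]) t) (extL (l ++ [k]) (t+1)) = K (extL l t) (extL l (t+1)) := by
    intro t ht
    simp only [Finset.mem_range] at ht
    rw [hext t (by omega), hext (t+1) (by omega)]
  have h3 : l.length - 1 + 1 = l.length := by omega
  rw [Finset.prod_congr rfl h2, hext 0 (by omega), hext (l.length - 1) (by omega),
    h3, hlast, ← extL_lt (by omega)]
  ring

end Meas


/-! ### K facts and the sum over the cell-0 states -/

def Sset (n : ℕ) : Set ℕ := {a : ℕ | qcell n (hmap a) = 0}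

lemma zero_mem_Sset (n : ℕ) : 0 ∈ Sset n := by
  show qcell n (hmap 0) = 0
  rw [hmap_zero, qcell_zero]

lemma K_one_nonneg (k : ℕ) : 0 ≤ K 1 k := by
  unfold K
  norm_num
  split_ifs <;> positivity

lemma K_one_zero : K 1 0 = 1/2 := by norm_num [K]

lemma K_one_pos {k : ℕ} (hk : k ≠ 1) : 0 < K 1 k := by
  rcases Nat.eq_zero_or_pos k with rfl | h
  · rw [K_one_zero]; norm_num
  · have h2 : 2 ≤ k := by omega
    unfold K
    norm_num
    rw [if_neg (by omega), if_pos h2]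
    positivity

lemma K_one_le (k : ℕ) : K 1 k ≤ (1/2 : ℝ) ^ k := by
  rcases Nat.lt_or_ge k 2 with h | h
  · interval_cases k <;> norm_num [K]
  · have hK : K 1 k = (2:ℝ) ^ (-(k:ℤ)) := by
      unfold K
      rw [if_neg (by norm_num), if_pos rfl, if_neg (by omega), if_pos h]
    rw [hK, zpow_neg, zpow_natCast, one_div, inv_pow]

lemma summable_K_one : Summable (fun k : ℕ => K 1 k) := by
  apply Summable.of_nonneg_of_le K_one_nonneg K_one_le
  exact summable_geometric_of_lt_one (by norm_num) (by norm_num)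

def csum (n : ℕ) : ℝ := ∑' k : Sset n, K 1 (k : ℕ)

lemma csum_ge (n : ℕ) : 1/2 ≤ csum n := by
  have hs : Summable (fun k : Sset n => K 1 (k : ℕ)) := summable_K_one.subtype _
  have := Summable.le_tsum hs ⟨0, zero_mem_Sset n⟩ (fun j _ => K_one_nonneg _)
  rwa [K_one_zero] at this

lemma csum_pos (n : ℕ) : 0 < csum n := lt_of_lt_of_le (by norm_num) (csum_ge n)

section Decomp

variable {Ω : Type*} [MeasurableSpace Ω] (μ : MeasureTheory.Measure Ω)
  [MeasureTheory.IsProbabilityMeasure μ] (M : ℤ → Ω → ℕ)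

/-- sandwich lemma for measures -/
lemma measure_eq_sandwich {A U G : Set Ω} (hGc : μ Gᶜ = 0) (h1 : A ∩ G ⊆ U) (h2 : U ⊆ A) :
    μ A = μ U := by
  refine le_antisymm ?_ (measure_mono h2)
  calc μ A ≤ μ ((A ∩ G) ∪ Gᶜ) := by
        apply measure_mono
        intro a ha
        by_cases hg : a ∈ G
        · exact Or.inl ⟨ha, hg⟩
        · exact Or.inr hg
    _ ≤ μ (A ∩ G) + μ Gᶜ := measure_union_le _ _
    _ = μ (A ∩ G) := by rw [hGc, add_zero]
    _ ≤ μ U := measure_mono h1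

/-- **main decomposition lemma** -/
lemma decomp (hMc : IsCounterexampleChain μ M)
    (hG : μ {ω | ∀ m : ℕ, (MS (pathM M ω) (lamW (pathM M ω) m) (m+1)).Nonempty}ᶜ = 0)
    (x : ℕ → ℝ) (n : ℕ) (hn : 1 ≤ n)
    (hx : ∀ m, 1 ≤ m → m < n → 0 ≤ x m ∧ x m < (2:ℝ) ^ (-(m:ℤ) - 1)) :
    ∃ Q : ℝ, 0 ≤ Q ∧
      (μ {ω | BP x n (pathM M ω)}).toReal = Q * csum n ∧
      ∀ k : ℕ, k ∈ Sset n →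
        (μ ({ω | BP x n (pathM M ω)} ∩
            {ω | hmap (pathM M ω (lamW (pathM M ω) n)) = hmap k})).toReal = Q * K 1 k := by
  classical
  set G : Set Ω := {ω | ∀ m : ℕ, (MS (pathM M ω) (lamW (pathM M ω) m) (m+1)).Nonempty} with hGdef
  set Bn : Set Ω := {ω | BP x n (pathM M ω)} with hBdef
  haveI : Countable ↥(VP x n) := (Set.to_countable _).to_subtype
  set Q : ℝ := ∑' l : VP x n, (μ (Cyl M (l : List ℕ))).toReal with hQdef
  -- per-prefix facts
  have hlen2 : ∀ l ∈ VP x n, 2 ≤ (l : List ℕ).length := fun l hl => (VP_struct hn hx hl).1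
  have hlast1 : ∀ l ∈ VP x n, (l:List ℕ).getD ((l:List ℕ).length - 1) 0 = 1 :=
    fun l hl => (VP_struct hn hx hl).2
  have hcylk : ∀ l ∈ VP x n, ∀ k : ℕ,
      (μ (Cyl M (l ++ [k]))).toReal = (μ (Cyl M l)).toReal * K 1 k := by
    intro l hl k
    rw [cyl_append_toReal μ M hMc l (by have := hlen2 l hl; omega) k, hlast1 l hl]
  -- claim B packaged
  have hclaimB : ∀ l ∈ VP x n, ∀ k ∈ Sset n, ∀ ω ∈ Cyl M (l ++ [k]),
      BP x n (pathM M ω) ∧ lamW (pathM M ω) n = l.length ∧ pathM M ω l.length = k := by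
    intro l hl k hk ω hω
    rw [cyl_append_set] at hω
    have hag : ∀ i < l.length, pathM M ω i = extL l i := fun i hi => hω.1 i hi
    have hvL : pathM M ω l.length = k := hω.2
    have hc : qcell n (hmap (pathM M ω l.length)) = 0 := by rw [hvL]; exact hk
    have := claimB hn hx hl hag hc
    exact ⟨this.1, this.2.1, hvL⟩
  -- claim A packaged
  have hclaimA : ∀ ω ∈ Bn ∩ G, ∃ l ∈ VP x n,
      (∀ i < (l:List ℕ).length, M (i : ℤ) ω = extL l i) ∧
      lamW (pathM M ω) n = l.length ∧ qcell n (hmap (pathM M ω l.length)) = 0 := by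
    intro ω hω
    have hbp : BP x n (pathM M ω) := hω.1
    have hinc : IncrTo n (pathM M ω) := fun m _ => hω.2 m
    obtain ⟨hvp, hq0⟩ := claimA hn hbp hinc hx
    set L := lamW (pathM M ω) n with hL
    refine ⟨List.ofFn (fun i : Fin L => pathM M ω i), hvp, ?_, ?_, ?_⟩
    · intro i hi
      rw [List.length_ofFn] at hi
      rw [extL_ofFn _ hi]
      rfl
    · rw [List.length_ofFn]
    · rw [List.length_ofFn]
      exact hq0
  -- disjointness
  have hdisj : ∀ (l l' : VP x n) (k k' : ℕ), k ∈ Sset n → k' ∈ Sset n → (l : List ℕ) ≠ l' →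
      Disjoint (Cyl M (l ++ [k])) (Cyl M (l' ++ [k'])) := by
    intro l l' k k' hk hk' hne
    rw [Set.disjoint_left]
    intro ω h1 h2
    apply hne
    rw [cyl_append_set] at h1 h2
    refine VP_unique hn hx l.2 (fun i hi => h1.1 i hi) ?_ l'.2 (fun i hi => h2.1 i hi) ?_
    · show qcell n (hmap (pathM M ω (l:List ℕ).length)) = 0
      have : pathM M ω (l:List ℕ).length = k := h1.2
      rw [this]; exact hk
    · show qcell n (hmap (pathM M ω (l':List ℕ).length)) = 0
      have : pathM M ω (l':List ℕ).length = k' := h2.2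
      rw [this]; exact hk'
  have hmeasC : ∀ l : List ℕ, MeasurableSet (Cyl M l) := measSet_Cyl M hMc.1
  -- Part 1: numerator
  have hnum : ∀ k ∈ Sset n,
      (μ (Bn ∩ {ω | hmap (pathM M ω (lamW (pathM M ω) n)) = hmap k})).toReal = Q * K 1 k := by
    intro k hk
    set T : Set Ω := {ω | hmap (pathM M ω (lamW (pathM M ω) n)) = hmap k} with hTdef
    have hcov : Bn ∩ T ∩ G ⊆ ⋃ l : VP x n, Cyl M (l ++ [k]) := by
      intro ω hω
      obtain ⟨l, hl, hc1, hc2, _⟩ := hclaimA ω ⟨hω.1.1, hω.2⟩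
      refine Set.mem_iUnion.2 ⟨⟨l, hl⟩, ?_⟩
      rw [cyl_append_set]
      refine ⟨hc1, ?_⟩
      show pathM M ω (l:List ℕ).length = k
      apply hmap_inj
      rw [← hc2]
      exact hω.1.2
    have hsub : (⋃ l : VP x n, Cyl M (l ++ [k])) ⊆ Bn ∩ T := by
      intro ω hω
      obtain ⟨l, hl⟩ := Set.mem_iUnion.1 hω
      obtain ⟨hbp, hlam, hvL⟩ := hclaimB l l.2 k hk ω hl
      refine ⟨hbp, ?_⟩
      show hmap (pathM M ω (lamW (pathM M ω) n)) = hmap k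
      rw [hlam, hvL]
    have hmeq : μ (Bn ∩ T) = μ (⋃ l : VP x n, Cyl M (l ++ [k])) :=
      measure_eq_sandwich μ hG hcov hsub
    have hdisj' : Pairwise (Function.onFun Disjoint fun l : VP x n => Cyl M (l ++ [k])) := by
      intro l l' hne
      exact hdisj l l' k k hk hk (fun h => hne (Subtype.ext h))
    rw [hmeq, MeasureTheory.measure_iUnion hdisj' (fun l => hmeasC _)]
    rw [ENNReal.tsum_toReal_eq (fun l => MeasureTheory.measure_ne_top μ _)]
    have : ∀ l : VP x n, (μ (Cyl M (l ++ [k]))).toReal = (μ (Cyl M (l:List ℕ))).toReal * K 1 k :=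
      fun l => hcylk l l.2 k
    rw [tsum_congr this, tsum_mul_right]
  -- Part 2: denominator
  have hden : (μ Bn).toReal = Q * csum n := by
    have hFeq : ∀ l : VP x n,
        (Cyl M (l:List ℕ) ∩ {ω | pathM M ω (l:List ℕ).length ∈ Sset n}) =
          ⋃ k : Sset n, Cyl M (l ++ [(k:ℕ)]) := by
      intro l
      ext ω
      simp only [Set.mem_inter_iff, Set.mem_iUnion, Set.mem_setOf_eq]
      constructor
      · rintro ⟨h1, h2⟩
        refine ⟨⟨pathM M ω (l:List ℕ).length, h2⟩, ?_⟩
        rw [cyl_append_set]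
        exact ⟨h1, rfl⟩
      · rintro ⟨k, hkk⟩
        rw [cyl_append_set] at hkk
        refine ⟨hkk.1, ?_⟩
        have : pathM M ω (l:List ℕ).length = (k:ℕ) := hkk.2
        rw [this]
        exact k.2
    have hcov : Bn ∩ G ⊆ ⋃ l : VP x n,
        (Cyl M (l:List ℕ) ∩ {ω | pathM M ω (l:List ℕ).length ∈ Sset n}) := by
      intro ω hω
      obtain ⟨l, hl, hc1, hc2, hc3⟩ := hclaimA ω hω
      exact Set.mem_iUnion.2 ⟨⟨l, hl⟩, hc1, hc3⟩
    have hsub : (⋃ l : VP x n,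
        (Cyl M (l:List ℕ) ∩ {ω | pathM M ω (l:List ℕ).length ∈ Sset n})) ⊆ Bn := by
      intro ω hω
      obtain ⟨l, hl⟩ := Set.mem_iUnion.1 hω
      rw [hFeq l] at hl
      obtain ⟨k, hkk⟩ := Set.mem_iUnion.1 hl
      exact (hclaimB l l.2 k k.2 ω hkk).1
    have hmeq : μ Bn = μ (⋃ l : VP x n,
        (Cyl M (l:List ℕ) ∩ {ω | pathM M ω (l:List ℕ).length ∈ Sset n})) :=
      measure_eq_sandwich μ hG hcov hsub
    have hmeasF : ∀ l : VP x n,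
        MeasurableSet (Cyl M (l:List ℕ) ∩ {ω | pathM M ω (l:List ℕ).length ∈ Sset n}) := by
      intro l
      apply (hmeasC _).inter
      have : {ω | pathM M ω (l:List ℕ).length ∈ Sset n} =
          (M ((l:List ℕ).length : ℤ)) ⁻¹' (Sset n) := rfl
      rw [this]
      exact (hMc.1 _) ((Set.to_countable _).measurableSet)
    have hdisjF : Pairwise (Function.onFun Disjoint fun l : VP x n =>
        Cyl M (l:List ℕ) ∩ {ω | pathM M ω (l:List ℕ).length ∈ Sset n}) := by
      intro l l' hne
      simp only [Function.onFun]
      rw [Set.disjoint_left]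
      intro ω h1 h2
      apply hne
      apply Subtype.ext
      refine VP_unique hn hx l.2 (fun i hi => h1.1 i hi) h1.2 l'.2 (fun i hi => h2.1 i hi) h2.2
    rw [hmeq, MeasureTheory.measure_iUnion hdisjF hmeasF]
    rw [ENNReal.tsum_toReal_eq (fun l => MeasureTheory.measure_ne_top μ _)]
    have hFval : ∀ l : VP x n,
        (μ (Cyl M (l:List ℕ) ∩ {ω | pathM M ω (l:List ℕ).length ∈ Sset n})).toReal =
          (μ (Cyl M (l:List ℕ))).toReal * csum n := by
      intro l
      rw [hFeq l]
      have hd : Pairwise (Function.onFun Disjoint fun k : Sset n => Cyl M (l ++ [(k:ℕ)])) := by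
        intro k k' hne
        simp only [Function.onFun]
        rw [Set.disjoint_left]
        intro ω h1 h2
        rw [cyl_append_set] at h1 h2
        apply hne
        apply Subtype.ext
        rw [← h1.2, ← h2.2]
      rw [MeasureTheory.measure_iUnion hd (fun k => hmeasC _)]
      rw [ENNReal.tsum_toReal_eq (fun k => MeasureTheory.measure_ne_top μ _)]
      have : ∀ k : Sset n, (μ (Cyl M (l ++ [(k:ℕ)]))).toReal =
          (μ (Cyl M (l:List ℕ))).toReal * K 1 (k:ℕ) := fun k => hcylk l l.2 k
      rw [tsum_congr this, csum, tsum_mul_left]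
    rw [tsum_congr hFval, tsum_mul_right]
  refine ⟨Q, ?_, hden, hnum⟩
  apply tsum_nonneg
  intro l
  exact ENNReal.toReal_nonneg

end Decomp


section Final

variable {Ω : Type*} [MeasurableSpace Ω] (μ : MeasureTheory.Measure Ω)
  [MeasureTheory.IsProbabilityMeasure μ] (M : ℤ → Ω → ℕ)

lemma BP_one_iff (x : ℕ → ℝ) (v : ℕ → ℕ) : BP x 1 v ↔ v 0 = 0 ∧ v 1 = 1 := by
  unfold BP
  constructor
  · rintro ⟨h1, h2, _⟩; exact ⟨h1, h2⟩
  · rintro ⟨h1, h2⟩; exact ⟨h1, h2, fun m hm1 hm2 => by omega⟩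

lemma BP_succ_iff (x : ℕ → ℝ) (n : ℕ) (hn : 1 ≤ n) (v : ℕ → ℕ) :
    BP x (n+1) v ↔ BP x n v ∧ hmap (v (lamW v n)) = x n := by
  unfold BP
  constructor
  · rintro ⟨h1, h2, h3⟩
    exact ⟨⟨h1, h2, fun m hm1 hm2 => h3 m hm1 (by omega)⟩, h3 n hn (by omega)⟩
  · rintro ⟨⟨h1, h2, h3⟩, h4⟩
    refine ⟨h1, h2, fun m hm1 hm2 => ?_⟩
    rcases Nat.lt_or_ge m n with h | h
    · exact h3 m hm1 h
    · have : m = n := by omega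
      subst this
      exact h4

lemma cyl_two_set (a b : ℕ) :
    Cyl M ([a, b]) = {ω | M (0:ℤ) ω = a ∧ M (1:ℤ) ω = b} := by
  ext ω
  simp only [Cyl, Set.mem_setOf_eq, List.length_cons, List.length_nil]
  constructor
  · intro h
    have h0 := h 0 (by omega)
    have h1 := h 1 (by omega)
    simp only [Nat.cast_zero] at h0
    simp only [Nat.cast_one] at h1
    exact ⟨h0, h1⟩
  · rintro ⟨h0, h1⟩ i hi
    interval_cases i
    · simpa [extL] using h0
    · simpa [extL] using h1

lemma cyl_two_toReal (hMc : IsCounterexampleChain μ M) (a b : ℕ) :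
    (μ (Cyl M ([a, b]))).toReal = piDist a * K a b := by
  rw [cyl_toReal μ M hMc ([a, b]) (by simp)]
  norm_num [extL]

lemma Bev_one (hMc : IsCounterexampleChain μ M) (x : ℕ → ℝ) :
    (μ {ω | BP x 1 (pathM M ω)}).toReal = 2/7 := by
  have hset : {ω | BP x 1 (pathM M ω)} = Cyl M ([0, 1]) := by
    rw [cyl_two_set]
    ext ω
    simp only [Set.mem_setOf_eq, BP_one_iff]
    constructor
    · rintro ⟨h1, h2⟩
      refine ⟨?_, ?_⟩
      · have : pathM M ω 0 = M (0:ℤ) ω := by simp [pathM]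
        rw [← this]; exact h1
      · have : pathM M ω 1 = M (1:ℤ) ω := by simp [pathM]
        rw [← this]; exact h2
    · rintro ⟨h1, h2⟩
      constructor
      · show M ((0:ℕ):ℤ) ω = 0
        simpa using h1
      · show M ((1:ℕ):ℤ) ω = 1
        simpa using h2
  rw [hset, cyl_two_toReal μ M hMc]
  norm_num [piDist, K]

lemma pos_chain (hMc : IsCounterexampleChain μ M)
    (hG : μ {ω | ∀ m : ℕ, (MS (pathM M ω) (lamW (pathM M ω) m) (m+1)).Nonempty}ᶜ = 0)
    (x : ℕ → ℝ) (j : ℕ)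
    (hxall : ∀ m, 1 ≤ m → m ≤ j → ∃ k, hmap k = x m ∧ x m < (2:ℝ) ^ (-(m:ℤ) - 1)) :
    ∀ n, 1 ≤ n → n ≤ j → 0 < (μ {ω | BP x n (pathM M ω)}).toReal := by
  have hxbound : ∀ m, 1 ≤ m → m ≤ j → 0 ≤ x m ∧ x m < (2:ℝ) ^ (-(m:ℤ) - 1) := by
    intro m h1 h2
    obtain ⟨k, hk, hb⟩ := hxall m h1 h2
    exact ⟨hk ▸ hmap_nonneg k, hb⟩
  intro n
  induction n with
  | zero => omega
  | succ n ih =>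
    intro _ hnj
    rcases Nat.eq_zero_or_pos n with rfl | hn1
    · rw [Bev_one μ M hMc]
      norm_num
    · have ihv := ih (by omega) (by omega)
      obtain ⟨Q, hQ0, hden, hnum⟩ := decomp μ M hMc hG x n (by omega)
        (fun m h1 h2 => hxbound m h1 (by omega))
      obtain ⟨k, hk, hb⟩ := hxall n (by omega) (by omega)
      have hkS : k ∈ Sset n := by
        show qcell n (hmap k) = 0
        apply qcell_eq_zero_of_lt (hmap_nonneg k)
        rw [hk]
        calc x n < (2:ℝ) ^ (-(n:ℤ) - 1) := hb
          _ ≤ (2:ℝ) ^ (-(n:ℤ)) := zpow_le_zpow_right₀ (by norm_num) (by omega)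
      have hk1 : k ≠ 1 := by
        intro h1
        rw [h1, hmap_one] at hk
        have h2 : x n < 1 := lt_of_lt_of_le hb (by
          calc (2:ℝ) ^ (-(n:ℤ) - 1) ≤ (2:ℝ) ^ (0:ℤ) :=
                zpow_le_zpow_right₀ (by norm_num) (by omega)
            _ = 1 := by norm_num)
        linarith
      have hQpos : 0 < Q := by
        rcases lt_or_eq_of_le hQ0 with h | h
        · exact h
        · rw [← h, zero_mul] at hden
          rw [hden] at ihv
          norm_num at ihv
      have hsetq : {ω | BP x (n+1) (pathM M ω)} =
          {ω | BP x n (pathM M ω)} ∩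
          {ω | hmap (pathM M ω (lamW (pathM M ω) n)) = hmap k} := by
        ext ω
        rw [Set.mem_inter_iff]
        simp only [Set.mem_setOf_eq]
        rw [BP_succ_iff x n (by omega), hk]
      rw [hsetq, hnum k hkS]
      exact mul_pos hQpos (K_one_pos hk1)

lemma rhs_den (hMc : IsCounterexampleChain μ M) (j : ℕ) :
    (μ {ω | M (0:ℤ) ω = 1 ∧ M (1:ℤ) ω ∈ Sset j}).toReal = 2/7 * csum j := by
  classical
  haveI : Countable ↥(Sset j) := (Set.to_countable _).to_subtype
  have hset : {ω | M (0:ℤ) ω = 1 ∧ M (1:ℤ) ω ∈ Sset j} =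
      ⋃ k : Sset j, Cyl M ([1, (k:ℕ)]) := by
    ext ω
    simp only [Set.mem_setOf_eq, Set.mem_iUnion]
    constructor
    · rintro ⟨h1, h2⟩
      exact ⟨⟨M (1:ℤ) ω, h2⟩, by rw [cyl_two_set]; exact ⟨h1, rfl⟩⟩
    · rintro ⟨k, hkk⟩
      rw [cyl_two_set] at hkk
      exact ⟨hkk.1, by rw [hkk.2]; exact k.2⟩
  have hdisj : Pairwise (Function.onFun Disjoint fun k : Sset j => Cyl M ([1, (k:ℕ)])) := by
    intro k k' hne
    simp only [Function.onFun]
    rw [Set.disjoint_left]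
    intro ω h1 h2
    rw [cyl_two_set] at h1 h2
    exact hne (Subtype.ext (by rw [← h1.2, ← h2.2]))
  rw [hset, MeasureTheory.measure_iUnion hdisj (fun k => measSet_Cyl M hMc.1 _)]
  rw [ENNReal.tsum_toReal_eq (fun k => MeasureTheory.measure_ne_top μ _)]
  have : ∀ k : Sset j, (μ (Cyl M ([1, (k:ℕ)]))).toReal = 2/7 * K 1 (k:ℕ) := by
    intro k
    rw [cyl_two_toReal μ M hMc]
    norm_num [piDist]
  rw [tsum_congr this, csum, tsum_mul_left]

lemma rhs_num (hMc : IsCounterexampleChain μ M) (j : ℕ) (k : ℕ) (hk : k ∈ Sset j) :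
    (μ ({ω | M (0:ℤ) ω = 1 ∧ M (1:ℤ) ω ∈ Sset j} ∩ {ω | M (1:ℤ) ω = k})).toReal =
      2/7 * K 1 k := by
  have hset : {ω | M (0:ℤ) ω = 1 ∧ M (1:ℤ) ω ∈ Sset j} ∩ {ω | M (1:ℤ) ω = k} =
      Cyl M ([1, k]) := by
    rw [cyl_two_set]
    ext ω
    simp only [Set.mem_inter_iff, Set.mem_setOf_eq]
    constructor
    · rintro ⟨⟨h1, _⟩, h2⟩
      exact ⟨h1, h2⟩
    · rintro ⟨h1, h2⟩
      exact ⟨⟨h1, by rw [h2]; exact hk⟩, h2⟩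
  rw [hset, cyl_two_toReal μ M hMc]
  norm_num [piDist]

end Final


lemma hmap_eq_zero_iff (a : ℕ) : hmap a = 0 ↔ a = 0 :=
  ⟨fun h => hmap_inj (h.trans hmap_zero.symm), fun h => h ▸ hmap_zero⟩

lemma hmap_eq_one_iff (a : ℕ) : hmap a = 1 ↔ a = 1 :=
  ⟨fun h => hmap_inj (h.trans hmap_one.symm), fun h => h ▸ hmap_one⟩

theorem stmt15' {Ω : Type*} [MeasurableSpace Ω] (μ : MeasureTheory.Measure Ω)
    [MeasureTheory.IsProbabilityMeasure μ]
    (M : ℤ → Ω → ℕ) (hM : IsCounterexampleChain μ M)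
    (X : ℤ → Ω → ℝ) (hX : ∀ n ω, X n ω = hmap (M n ω))
    (hfin : LamFinite μ X)
    (j : ℕ) (hj : 1 ≤ j) (x : ℕ → ℝ) (hx : ∀ i, 1 ≤ i → i ≤ j → x i ∈ A i) :
    (ProbabilityTheory.cond μ {ω | X 0 ω = 0 ∧ X 1 ω = 1 ∧
        ∀ m : ℕ, 1 ≤ m → m < j → X (lam X m ω : ℤ) ω = x m})
      {ω | X (lam X j ω : ℤ) ω = x j} =
    (ProbabilityTheory.cond μ {ω | X 0 ω = 1 ∧ X 1 ω ∈ A (j - 1)}) {ω | X 1 ω = x j} := by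
  classical
  have hxall : ∀ m, 1 ≤ m → m ≤ j → ∃ k, hmap k = x m ∧ x m < (2:ℝ) ^ (-(m:ℤ) - 1) := by
    intro m h1 h2
    obtain ⟨⟨k, hk⟩, hb⟩ := hx m h1 h2
    exact ⟨k, hk, hb⟩
  have hxbound : ∀ m, 1 ≤ m → m < j → 0 ≤ x m ∧ x m < (2:ℝ) ^ (-(m:ℤ) - 1) := by
    intro m h1 h2
    obtain ⟨k, hk, hb⟩ := hxall m h1 (by omega)
    exact ⟨hk ▸ hmap_nonneg k, hb⟩
  obtain ⟨kj, hkj, hbj⟩ := hxall j hj le_rfl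
  have hkjS : kj ∈ Sset j := by
    show qcell j (hmap kj) = 0
    apply qcell_eq_zero_of_lt (hmap_nonneg kj)
    rw [hkj]
    calc x j < (2:ℝ) ^ (-(j:ℤ) - 1) := hbj
      _ ≤ (2:ℝ) ^ (-(j:ℤ)) := zpow_le_zpow_right₀ (by norm_num) (by omega)
  have hkj1 : kj ≠ 1 := by
    intro h1
    rw [h1, hmap_one] at hkj
    have h2 : x j < 1 := lt_of_lt_of_le hbj (by
      calc (2:ℝ) ^ (-(j:ℤ) - 1) ≤ (2:ℝ) ^ (0:ℤ) :=
            zpow_le_zpow_right₀ (by norm_num) (by omega)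
        _ = 1 := by norm_num)
    linarith
  -- translate the a.s. finiteness
  have hG : μ {ω | ∀ m : ℕ, (MS (pathM M ω) (lamW (pathM M ω) m) (m+1)).Nonempty}ᶜ = 0 := by
    unfold LamFinite at hfin
    rw [MeasureTheory.ae_iff] at hfin
    have hiff : ∀ ω : Ω, (∀ n : ℕ,
        {t : ℕ | 0 < t ∧ ∀ i : ℕ, i ≤ lam X n ω →
          qcell (n + 1) (X ((t : ℤ) + (i : ℤ)) ω) = qcell (n + 1) (X (i : ℤ) ω)}.Nonempty) ↔
        (∀ m : ℕ, (MS (pathM M ω) (lamW (pathM M ω) m) (m+1)).Nonempty) := by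
      intro ω
      constructor
      · intro h m
        have h2 := h m
        rw [(lam_eq_lamW X M hX ω m).2] at h2
        exact h2
      · intro h n
        have h2 := h n
        rw [(lam_eq_lamW X M hX ω n).2]
        exact h2
    have hset : {ω | ∀ m : ℕ, (MS (pathM M ω) (lamW (pathM M ω) m) (m+1)).Nonempty}ᶜ =
        {ω | ¬ ∀ n : ℕ,
          {t : ℕ | 0 < t ∧ ∀ i : ℕ, i ≤ lam X n ω →
            qcell (n + 1) (X ((t : ℤ) + (i : ℤ)) ω) = qcell (n + 1) (X (i : ℤ) ω)}.Nonempty} := by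
      ext ω
      simp only [Set.mem_compl_iff, Set.mem_setOf_eq]
      rw [hiff ω]
    rw [hset]
    exact hfin
  -- decomposition at stage j
  obtain ⟨Q, hQ0, hden, hnum⟩ := decomp μ M hM hG x j hj hxbound
  -- lam = lamW pointwise
  have hlam : ∀ ω (m : ℕ), lam X m ω = lamW (pathM M ω) m :=
    fun ω m => (lam_eq_lamW X M hX ω m).1
  -- set translations
  have hBset : {ω | X 0 ω = 0 ∧ X 1 ω = 1 ∧
      ∀ m : ℕ, 1 ≤ m → m < j → X (lam X m ω : ℤ) ω = x m} = {ω | BP x j (pathM M ω)} := by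
    ext ω
    simp only [Set.mem_setOf_eq]
    have e0 : X 0 ω = hmap (pathM M ω 0) := by
      rw [hX]
      show hmap (M 0 ω) = hmap (M ((0:ℕ):ℤ) ω)
      norm_num
    have e1 : X 1 ω = hmap (pathM M ω 1) := by
      rw [hX]
      show hmap (M 1 ω) = hmap (M ((1:ℕ):ℤ) ω)
      norm_num
    have em : ∀ m : ℕ, X (lam X m ω : ℤ) ω = hmap (pathM M ω (lamW (pathM M ω) m)) := by
      intro m
      rw [hX]
      show hmap (M ((lam X m ω : ℕ) : ℤ) ω) = _
      rw [hlam ω m]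
      rfl
    unfold BP
    constructor
    · rintro ⟨h1, h2, h3⟩
      refine ⟨?_, ?_, fun m hm1 hm2 => ?_⟩
      · rw [e0] at h1
        rw [← hmap_eq_zero_iff]
        exact h1
      · rw [e1] at h2
        rw [← hmap_eq_one_iff]
        exact h2
      · rw [← em m]
        exact h3 m hm1 hm2
    · rintro ⟨h1, h2, h3⟩
      refine ⟨?_, ?_, fun m hm1 hm2 => ?_⟩
      · rw [e0, hmap_eq_zero_iff]
        exact h1
      · rw [e1, hmap_eq_one_iff]
        exact h2
      · rw [em m]
        exact h3 m hm1 hm2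
  have hTset : {ω | X (lam X j ω : ℤ) ω = x j} =
      {ω | hmap (pathM M ω (lamW (pathM M ω) j)) = hmap kj} := by
    ext ω
    simp only [Set.mem_setOf_eq]
    have em : X (lam X j ω : ℤ) ω = hmap (pathM M ω (lamW (pathM M ω) j)) := by
      rw [hX]
      show hmap (M ((lam X j ω : ℕ) : ℤ) ω) = _
      rw [hlam ω j]
      rfl
    rw [em, hkj]
  have hDset : {ω | X 0 ω = 1 ∧ X 1 ω ∈ A (j - 1)} =
      {ω | M (0:ℤ) ω = 1 ∧ M (1:ℤ) ω ∈ Sset j} := by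
    ext ω
    simp only [Set.mem_setOf_eq]
    have hcast : -((j - 1 : ℕ) : ℤ) - 1 = -(j:ℤ) := by
      have : ((j - 1 : ℕ) : ℤ) = (j:ℤ) - 1 := by
        have := hj
        push_cast [this]
        omega
      rw [this]
      ring
    constructor
    · rintro ⟨h1, h2⟩
      rw [hX] at h1 h2
      refine ⟨(hmap_eq_one_iff _).1 h1, ?_⟩
      show qcell j (hmap (M 1 ω)) = 0
      apply qcell_eq_zero_of_lt (hmap_nonneg _)
      have hb := h2.2
      rw [hcast] at hb
      exact hb
    · rintro ⟨h1, h2⟩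
      rw [hX, hX]
      refine ⟨(hmap_eq_one_iff _).2 h1, ⟨M 1 ω, rfl⟩, ?_⟩
      rw [hcast]
      have : qcell j (hmap (M 1 ω)) = 0 := h2
      exact (qcell_eq_zero_iff (hmap_nonneg _)).1 this
  have hT'set : {ω | X 1 ω = x j} = {ω | M (1:ℤ) ω = kj} := by
    ext ω
    simp only [Set.mem_setOf_eq]
    rw [hX, ← hkj]
    exact ⟨fun h => hmap_inj h, fun h => by rw [h]⟩
  -- measurability
  have hBmeas : MeasurableSet {ω | BP x j (pathM M ω)} := by
    have : {ω | BP x j (pathM M ω)} = pathM M ⁻¹' {v | BP x j v} := rfl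
    rw [this]
    exact (measurable_pathM M hM.1) (measSet_BP x j)
  have hDmeas : MeasurableSet {ω | M (0:ℤ) ω = 1 ∧ M (1:ℤ) ω ∈ Sset j} := by
    have : {ω | M (0:ℤ) ω = 1 ∧ M (1:ℤ) ω ∈ Sset j} =
        (M 0) ⁻¹' {1} ∩ (M 1) ⁻¹' (Sset j) := rfl
    rw [this]
    exact ((hM.1 0) (MeasurableSet.singleton 1)).inter
      ((hM.1 1) ((Set.to_countable _).measurableSet))
  -- positivity
  have hpos := pos_chain μ M hM hG x j hxall j hj le_rfl
  -- final computation
  rw [hBset, hTset, hDset, hT'set]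
  rw [ProbabilityTheory.cond_apply hBmeas, ProbabilityTheory.cond_apply hDmeas]
  set a := μ {ω | BP x j (pathM M ω)} with ha
  set c := μ ({ω | BP x j (pathM M ω)} ∩
    {ω | hmap (pathM M ω (lamW (pathM M ω) j)) = hmap kj}) with hc
  set b := μ {ω | M (0:ℤ) ω = 1 ∧ M (1:ℤ) ω ∈ Sset j} with hb
  set d := μ ({ω | M (0:ℤ) ω = 1 ∧ M (1:ℤ) ω ∈ Sset j} ∩ {ω | M (1:ℤ) ω = kj}) with hd
  have haT : a ≠ ⊤ := MeasureTheory.measure_ne_top μ _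
  have hbT : b ≠ ⊤ := MeasureTheory.measure_ne_top μ _
  have hcT : c ≠ ⊤ := MeasureTheory.measure_ne_top μ _
  have hdT : d ≠ ⊤ := MeasureTheory.measure_ne_top μ _
  have ha0 : a ≠ 0 := by
    intro h
    rw [h] at hpos
    simp at hpos
  have hbval : b.toReal = 2/7 * csum j := rhs_den μ M hM j
  have hdval : d.toReal = 2/7 * K 1 kj := rhs_num μ M hM j kj hkjS
  have hb0 : b ≠ 0 := by
    intro h
    rw [h] at hbval
    simp only [ENNReal.toReal_zero] at hbval
    have := csum_pos j
    nlinarith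
  rw [← ENNReal.div_eq_inv_mul, ← ENNReal.div_eq_inv_mul]
  rw [ENNReal.div_eq_div_iff hb0 hbT ha0 haT]
  apply (ENNReal.toReal_eq_toReal_iff' (ENNReal.mul_ne_top hbT hcT) (ENNReal.mul_ne_top haT hdT)).1
  rw [ENNReal.toReal_mul, ENNReal.toReal_mul, hbval, hdval, hden, hnum kj hkjS]
  ring

end S15

/-- For the counterexample process, if `x_i ∈ A_i` for `1 ≤ i ≤ j`,
then for every `j ≥ 1`,
`P( X_{λ_j} = x_j | X_0^1 = (0,1), X_{λ_m} = x_m for 1 ≤ m < j )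
  = P( X_1 = x_j | X_0 = 1, X_1 ∈ A_{j-1} )`. -/
theorem stmt15 {Ω : Type*} [MeasurableSpace Ω] (μ : Measure Ω) [IsProbabilityMeasure μ]
    (M : ℤ → Ω → ℕ) (hM : IsCounterexampleChain μ M)
    (X : ℤ → Ω → ℝ) (hX : ∀ n ω, X n ω = hmap (M n ω))
    (hfin : LamFinite μ X)
    (j : ℕ) (hj : 1 ≤ j) (x : ℕ → ℝ) (hx : ∀ i, 1 ≤ i → i ≤ j → x i ∈ A i) :
    (μ[|{ω | X 0 ω = 0 ∧ X 1 ω = 1 ∧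
        ∀ m : ℕ, 1 ≤ m → m < j → X (lam X m ω : ℤ) ω = x m}])
      {ω | X (lam X j ω : ℤ) ω = x j} =
    (μ[|{ω | X 0 ω = 1 ∧ X 1 ω ∈ A (j - 1)}]) {ω | X 1 ω = x j} :=
  S15.stmt15' μ M hM X hX hfin j hj x hx

end
end
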